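/- arXiv:1812.03059 — 3 statements merged into one kernel-verified Lean document; each statement's English description precedes it below -/
import Mathlib

section
/- For every k ≥ 2 and every integer x with L+1 ≤ x ≤ U−3 (where U−L ≥ 4), β_k(x) = pq·β_{k−2}(x) + p·β_{k−1}(x+2) − pq·β_{k−2}(x+1) + q·β_{k−1}(x−1). -/
open MeasureTheory ProbabilityTheory Filter
open scoped ENNReal Classical

noncomputable section

variable {Ω : Type*} [MeasurableSpace Ω]

/-- The `k`-th step of the ladder chain `L(2,2,p)` built from the driving
sequence `ξ` (indexed from 1): `X₁ = ±1` according to `ξ₁`, and for `k ≥ 2`,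
`X_k = -1` if `ξ_k = -1`, `X_k = 2` if `ξ_k = ξ_{k-1} = 1`, and `X_k = 1`
if `ξ_k = 1, ξ_{k-1} = -1`. -/
def ladderX (ξ : ℕ → Ω → ℤ) (k : ℕ) (ω : Ω) : ℤ :=
  if k = 1 then (if ξ 1 ω = 1 then 1 else -1)
  else if ξ k ω = -1 then -1
  else if ξ (k - 1) ω = 1 then 2 else 1

/-- The ladder chain `S_n = X₁ + ⋯ + X_n` (with `S_0 = 0`). -/
def ladderS (ξ : ℕ → Ω → ℤ) (n : ℕ) (ω : Ω) : ℤ :=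
  ∑ k ∈ Finset.Icc 1 n, ladderX ξ k ω

/-- The truncated exit time `τ_k^x`: the least `l ≤ k` with `S_l^x ≤ L` or
`S_l^x ≥ U`, and `k` if there is no such `l`. -/
def ladderTau (ξ : ℕ → Ω → ℤ) (L U x : ℤ) (k : ℕ) (ω : Ω) : ℕ :=
  if ∃ l ≤ k, (x + ladderS ξ l ω ≤ L ∨ U ≤ x + ladderS ξ l ω)
  then sInf {l | l ≤ k ∧ (x + ladderS ξ l ω ≤ L ∨ U ≤ x + ladderS ξ l ω)}
  else k

/-- The event `A_k^x`: the walk started at `x` exits through the lower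
barrier `L` within the first `k` steps. -/
def ladderA (ξ : ℕ → Ω → ℤ) (L U x : ℤ) (k : ℕ) : Set Ω :=
  ⋃ l ∈ Finset.range (k + 1),
    {ω | ladderTau ξ L U x k ω = l ∧ x + ladderS ξ l ω ≤ L}

/-- The event `B_k^x`: the walk started at `x` exits through the upper
barrier `U` within the first `k` steps. -/
def ladderB (ξ : ℕ → Ω → ℤ) (L U x : ℤ) (k : ℕ) : Set Ω :=
  ⋃ l ∈ Finset.range (k + 1),
    {ω | ladderTau ξ L U x k ω = l ∧ U ≤ x + ladderS ξ l ω}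

section Aux
variable {Ω Ω' : Type*}

lemma ladderS_zero (ξ : ℕ → Ω → ℤ) (ω : Ω) : ladderS ξ 0 ω = 0 := by
  simp [ladderS]

lemma ladderX_congr {ξ : ℕ → Ω → ℤ} {ξ' : ℕ → Ω' → ℤ} {ω : Ω} {ω' : Ω'} {k : ℕ}
    (hk : 1 ≤ k) (h : ∀ i, 1 ≤ i → i ≤ k → ξ i ω = ξ' i ω') :
    ladderX ξ k ω = ladderX ξ' k ω' := by
  unfold ladderX
  rcases eq_or_ne k 1 with rfl | hne
  · simp [h 1 le_rfl le_rfl]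
  · have h1 : ξ k ω = ξ' k ω' := h k hk le_rfl
    have h2 : ξ (k - 1) ω = ξ' (k - 1) ω' := h (k - 1) (by omega) (by omega)
    simp [hne, h1, h2]

lemma ladderS_congr {ξ : ℕ → Ω → ℤ} {ξ' : ℕ → Ω' → ℤ} {ω : Ω} {ω' : Ω'} {k n : ℕ}
    (hn : n ≤ k) (h : ∀ i, 1 ≤ i → i ≤ k → ξ i ω = ξ' i ω') :
    ladderS ξ n ω = ladderS ξ' n ω' := by
  unfold ladderS
  refine Finset.sum_congr rfl fun j hj => ?_
  simp only [Finset.mem_Icc] at hj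
  exact ladderX_congr hj.1 fun i h1 h2 => h i h1 (le_trans h2 (le_trans hj.2 hn))

lemma ladderTau_le (ξ : ℕ → Ω → ℤ) (L U x : ℤ) (k : ℕ) (ω : Ω) :
    ladderTau ξ L U x k ω ≤ k := by
  unfold ladderTau
  split
  · next h =>
    obtain ⟨l0, hl0, hb0⟩ := h
    have hne : {l | l ≤ k ∧ (x + ladderS ξ l ω ≤ L ∨ U ≤ x + ladderS ξ l ω)}.Nonempty :=
      ⟨l0, hl0, hb0⟩
    exact (Nat.sInf_mem hne).1
  · exact le_rfl

lemma mem_ladderB_iff {ξ : ℕ → Ω → ℤ} {L U x : ℤ} {k : ℕ} {ω : Ω} :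
    ω ∈ ladderB ξ L U x k ↔ U ≤ x + ladderS ξ (ladderTau ξ L U x k ω) ω := by
  simp only [ladderB, Set.mem_iUnion, Finset.mem_range, Set.mem_setOf_eq]
  constructor
  · rintro ⟨l, _, rfl, h⟩
    exact h
  · intro h
    exact ⟨ladderTau ξ L U x k ω, Nat.lt_succ_of_le (ladderTau_le ξ L U x k ω), rfl, h⟩

lemma mem_ladderB_congr {ξ : ℕ → Ω → ℤ} {ξ' : ℕ → Ω' → ℤ} {ω : Ω} {ω' : Ω'} {L U x : ℤ} {k : ℕ}
    (h : ∀ i, 1 ≤ i → i ≤ k → ξ i ω = ξ' i ω') :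
    (ω ∈ ladderB ξ L U x k ↔ ω' ∈ ladderB ξ' L U x k) := by
  have hS : ∀ l ≤ k, ladderS ξ l ω = ladderS ξ' l ω' := fun l hl => ladderS_congr hl h
  have hset : {l | l ≤ k ∧ (x + ladderS ξ l ω ≤ L ∨ U ≤ x + ladderS ξ l ω)}
      = {l | l ≤ k ∧ (x + ladderS ξ' l ω' ≤ L ∨ U ≤ x + ladderS ξ' l ω')} := by
    ext l; simp only [Set.mem_setOf_eq]
    constructor <;> rintro ⟨hl, hb⟩ <;> exact ⟨hl, by rw [hS l hl] at *; exact hb⟩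
  have htau : ladderTau ξ L U x k ω = ladderTau ξ' L U x k ω' := by
    unfold ladderTau
    rw [hset]
    have hex : (∃ l ≤ k, (x + ladderS ξ l ω ≤ L ∨ U ≤ x + ladderS ξ l ω))
        ↔ (∃ l ≤ k, (x + ladderS ξ' l ω' ≤ L ∨ U ≤ x + ladderS ξ' l ω')) := by
      constructor <;> rintro ⟨l, hl, hb⟩ <;> exact ⟨l, hl, by rw [hS l hl] at *; exact hb⟩
    split <;> split <;> first | rfl | (next h1 h2 => exact absurd (hex.mp h1) h2) | (next h1 h2 => exact absurd (hex.mpr h2) h1)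
  rw [mem_ladderB_iff, mem_ladderB_iff, htau, hS _ (ladderTau_le ξ' L U x k ω')]

end Aux

section Shift
variable {Ω Ω' : Type*}

lemma ladderB_shift_iff (ξ : ℕ → Ω → ℤ) (ξ' : ℕ → Ω' → ℤ) (ω : Ω) (ω' : Ω')
    (L U y y' : ℤ) (n d : ℕ) (hd : 1 ≤ d)
    (hc : ∀ m, 1 ≤ m → m ≤ n → y + ladderS ξ (m + d) ω = y' + ladderS ξ' m ω')
    (hin : ∀ l, l < d → L < y + ladderS ξ l ω ∧ y + ladderS ξ l ω < U)
    (h0 : y' = y + ladderS ξ d ω ∨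
      (L < y' ∧ y' < U ∧ L < y + ladderS ξ d ω ∧ y + ladderS ξ d ω < U)) :
    (ω ∈ ladderB ξ L U y (n + d) ↔ ω' ∈ ladderB ξ' L U y' n) := by
  have hT0 : y' + ladderS ξ' 0 ω' = y' := by rw [ladderS_zero]; ring
  have key : ∀ m, m ≤ n →
      ((y + ladderS ξ (m + d) ω ≤ L ∨ U ≤ y + ladderS ξ (m + d) ω)
        ↔ (y' + ladderS ξ' m ω' ≤ L ∨ U ≤ y' + ladderS ξ' m ω')) := by
    intro m hm
    rcases Nat.eq_zero_or_pos m with rfl | hm1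
    · rw [hT0, Nat.zero_add]
      rcases h0 with h0 | h0
      · rw [← h0]
      · constructor <;> intro h <;> omega
    · rw [hc m hm1 hm]
  have keylt : ∀ l, l < d → ¬ (y + ladderS ξ l ω ≤ L ∨ U ≤ y + ladderS ξ l ω) := by
    intro l hl h
    have := hin l hl
    omega
  have hex : (∃ l ≤ n + d, (y + ladderS ξ l ω ≤ L ∨ U ≤ y + ladderS ξ l ω))
      ↔ (∃ m ≤ n, (y' + ladderS ξ' m ω' ≤ L ∨ U ≤ y' + ladderS ξ' m ω')) := by
    constructor
    · rintro ⟨l, hl, hb⟩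
      have hld : d ≤ l := by
        by_contra hcon
        exact keylt l (by omega) hb
      refine ⟨l - d, by omega, (key (l - d) (by omega)).1 ?_⟩
      rwa [Nat.sub_add_cancel hld]
    · rintro ⟨m, hm, hb⟩
      exact ⟨m + d, by omega, (key m hm).2 hb⟩
  rw [mem_ladderB_iff, mem_ladderB_iff]
  by_cases hE : ∃ l ≤ n + d, (y + ladderS ξ l ω ≤ L ∨ U ≤ y + ladderS ξ l ω)
  · have hE' := hex.mp hE
    have hne : {l | l ≤ n + d ∧ (y + ladderS ξ l ω ≤ L ∨ U ≤ y + ladderS ξ l ω)}.Nonempty := by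
      obtain ⟨l, hl, hb⟩ := hE; exact ⟨l, hl, hb⟩
    have hne' : {m | m ≤ n ∧ (y' + ladderS ξ' m ω' ≤ L ∨ U ≤ y' + ladderS ξ' m ω')}.Nonempty := by
      obtain ⟨m, hm, hb⟩ := hE'; exact ⟨m, hm, hb⟩
    have htau : ladderTau ξ L U y (n + d) ω
        = sInf {l | l ≤ n + d ∧ (y + ladderS ξ l ω ≤ L ∨ U ≤ y + ladderS ξ l ω)} := by
      rw [ladderTau, if_pos hE]
    have htau' : ladderTau ξ' L U y' n ω'
        = sInf {m | m ≤ n ∧ (y' + ladderS ξ' m ω' ≤ L ∨ U ≤ y' + ladderS ξ' m ω')} := by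
      rw [ladderTau, if_pos hE']
    set l0 := sInf {l | l ≤ n + d ∧ (y + ladderS ξ l ω ≤ L ∨ U ≤ y + ladderS ξ l ω)} with hl0def
    set m0 := sInf {m | m ≤ n ∧ (y' + ladderS ξ' m ω' ≤ L ∨ U ≤ y' + ladderS ξ' m ω')} with hm0def
    obtain ⟨hl0a, hl0b⟩ := Nat.sInf_mem hne
    obtain ⟨hm0a, hm0b⟩ := Nat.sInf_mem hne'
    rw [← hl0def] at hl0a hl0b
    rw [← hm0def] at hm0a hm0b
    have hdl0 : d ≤ l0 := by
      by_contra hcon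
      exact keylt l0 (by omega) hl0b
    have hm0le : m0 ≤ l0 - d := by
      apply Nat.sInf_le
      refine ⟨by omega, (key (l0 - d) (by omega)).1 ?_⟩
      rwa [Nat.sub_add_cancel hdl0]
    have hl0le : l0 ≤ m0 + d := Nat.sInf_le ⟨by omega, (key m0 hm0a).2 hm0b⟩
    have heq : l0 = m0 + d := by omega
    rw [htau, htau', heq]
    rcases Nat.eq_zero_or_pos m0 with hm00 | hm01
    · rw [hm00, Nat.zero_add, hT0]
      rcases h0 with h0 | h0
      · rw [h0]
      · exfalso
        rw [hm00, hT0] at hm0b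
        omega
    · rw [hc m0 hm01 hm0a]
  · have hE' : ¬ ∃ m ≤ n, (y' + ladderS ξ' m ω' ≤ L ∨ U ≤ y' + ladderS ξ' m ω') := by
      intro h; exact hE (hex.mpr h)
    have htau : ladderTau ξ L U y (n + d) ω = n + d := by rw [ladderTau, if_neg hE]
    have htau' : ladderTau ξ' L U y' n ω' = n := by rw [ladderTau, if_neg hE']
    rw [htau, htau']
    push_neg at hE hE'
    have h1 := hE (n + d) le_rfl
    have h2 := hE' n le_rfl
    constructor <;> intro h <;> omega
end Shift

section Cor
variable {Ω : Type*}

lemma ladderX_shift {ξ : ℕ → Ω → ℤ} {ω : Ω} (c j : ℕ) (hc : 1 ≤ c) (hj : 2 ≤ j) :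
    ladderX ξ (j + c) ω = ladderX (fun n => ξ (n + c)) j ω := by
  have h1 : j + c ≠ 1 := by omega
  have h2 : j ≠ 1 := by omega
  have h3 : j + c - 1 = (j - 1) + c := by omega
  simp only [ladderX, h1, h2, if_false, h3]

lemma ladder_sum_shift (f : ℕ → ℤ) (c m : ℕ) :
    ∑ j ∈ Finset.Icc 1 (m + c), f j
      = ∑ j ∈ Finset.Icc 1 c, f j + ∑ j ∈ Finset.Icc 1 m, f (j + c) := by
  induction m with
  | zero => simp
  | succ m ih =>
    rw [show m + 1 + c = (m + c) + 1 by omega, Finset.sum_Icc_succ_top (by omega), ih,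
        Finset.sum_Icc_succ_top (by omega : 1 ≤ m + 1), show m + c + 1 = m + 1 + c by omega]
    ring

lemma ladderS_one {ξ : ℕ → Ω → ℤ} {ω : Ω} :
    ladderS ξ 1 ω = if ξ 1 ω = 1 then 1 else -1 := by
  simp [ladderS, Finset.Icc_self, ladderX]

lemma ladder_corA {ξ : ℕ → Ω → ℤ} {ω : Ω} (hval : ∀ n, ξ n ω = 1 ∨ ξ n ω = -1)
    (h1 : ξ 1 ω = -1) {L U y : ℤ} (hyL : L < y) (hyU : y < U) (n : ℕ) :
    (ω ∈ ladderB ξ L U y (n + 1) ↔ ω ∈ ladderB (fun i => ξ (i + 1)) L U (y - 1) n) := by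
  have hstep : ∀ j, 1 ≤ j → ladderX ξ (j + 1) ω = ladderX (fun i => ξ (i + 1)) j ω := by
    intro j hj
    rcases eq_or_ne j 1 with rfl | hne
    · rcases hval 2 with h2 | h2 <;> norm_num [ladderX, h1, h2]
    · exact ladderX_shift 1 j le_rfl (by omega)
  have hS1 : ladderS ξ 1 ω = -1 := by rw [ladderS_one, if_neg (by rw [h1]; norm_num)]
  have hS : ∀ m, ladderS ξ (m + 1) ω = -1 + ladderS (fun i => ξ (i + 1)) m ω := by
    intro m
    unfold ladderS
    rw [ladder_sum_shift (fun j => ladderX ξ j ω) 1 m]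
    have e1 : ∑ j ∈ Finset.Icc 1 1, ladderX ξ j ω = ladderS ξ 1 ω := rfl
    rw [e1, hS1]
    congr 1
    exact Finset.sum_congr rfl fun j hj => hstep j (Finset.mem_Icc.mp hj).1
  refine ladderB_shift_iff ξ (fun i => ξ (i + 1)) ω ω L U y (y - 1) n 1 le_rfl ?_ ?_ ?_
  · intro m hm1 hmn
    rw [hS m]
    ring
  · intro l hl
    interval_cases l
    rw [ladderS_zero]
    constructor <;> omega
  · left
    rw [hS1]
    ring

lemma ladder_corB {ξ : ℕ → Ω → ℤ} {ω : Ω} (hval : ∀ n, ξ n ω = 1 ∨ ξ n ω = -1)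
    (h1 : ξ 1 ω = 1) (h2 : ξ 2 ω = 1) {L U y : ℤ} (hyL : L < y) (hyU : y + 2 < U) (n : ℕ) :
    (ω ∈ ladderB ξ L U y (n + 1) ↔ ω ∈ ladderB (fun i => ξ (i + 1)) L U (y + 2) n) := by
  have hstep : ∀ j, 1 ≤ j →
      ladderX ξ (j + 1) ω = ladderX (fun i => ξ (i + 1)) j ω + (if j = 1 then 1 else 0) := by
    intro j hj
    rcases eq_or_ne j 1 with rfl | hne
    · norm_num [ladderX, h1, h2]
    · rw [if_neg hne, ladderX_shift 1 j le_rfl (by omega)]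
      ring
  have hS1 : ladderS ξ 1 ω = 1 := by rw [ladderS_one, if_pos h1]
  have hS : ∀ m, 1 ≤ m → ladderS ξ (m + 1) ω = 2 + ladderS (fun i => ξ (i + 1)) m ω := by
    intro m hm
    unfold ladderS
    rw [ladder_sum_shift (fun j => ladderX ξ j ω) 1 m]
    have e1 : ∑ j ∈ Finset.Icc 1 1, ladderX ξ j ω = ladderS ξ 1 ω := rfl
    rw [e1, hS1]
    have e2 : ∑ j ∈ Finset.Icc 1 m, ladderX ξ (j + 1) ω
        = ∑ j ∈ Finset.Icc 1 m, (ladderX (fun i => ξ (i + 1)) j ω + (if j = 1 then 1 else 0)) :=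
      Finset.sum_congr rfl fun j hj => hstep j (Finset.mem_Icc.mp hj).1
    rw [e2, Finset.sum_add_distrib, Finset.sum_ite_eq' (Finset.Icc 1 m) 1 (fun _ => (1 : ℤ)),
        if_pos (Finset.mem_Icc.mpr ⟨le_rfl, hm⟩)]
    ring
  refine ladderB_shift_iff ξ (fun i => ξ (i + 1)) ω ω L U y (y + 2) n 1 le_rfl ?_ ?_ ?_
  · intro m hm1 hmn
    rw [hS m hm1]
    ring
  · intro l hl
    interval_cases l
    rw [ladderS_zero]
    constructor <;> omega
  · right
    rw [ladderS_one, if_pos h1]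
    omega

lemma ladder_corC {ξ : ℕ → Ω → ℤ} {ω : Ω} (hval : ∀ n, ξ n ω = 1 ∨ ξ n ω = -1)
    (h1 : ξ 1 ω = 1) (h2 : ξ 2 ω = -1) {L U y : ℤ} (hyL : L < y) (hyU : y + 1 < U) (n : ℕ) :
    (ω ∈ ladderB ξ L U y (n + 2) ↔ ω ∈ ladderB (fun i => ξ (i + 2)) L U y n) := by
  have hstep : ∀ j, 1 ≤ j → ladderX ξ (j + 2) ω = ladderX (fun i => ξ (i + 2)) j ω := by
    intro j hj
    rcases eq_or_ne j 1 with rfl | hne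
    · rcases hval 3 with h3 | h3 <;> norm_num [ladderX, h2, h3]
    · exact ladderX_shift 2 j (by omega) (by omega)
  have hS2 : ladderS ξ 2 ω = 0 := by
    have : Finset.Icc 1 2 = {1, 2} := by decide
    norm_num [ladderS, this, ladderX, h1, h2]
  have hS : ∀ m, ladderS ξ (m + 2) ω = ladderS ξ 2 ω + ladderS (fun i => ξ (i + 2)) m ω := by
    intro m
    unfold ladderS
    rw [ladder_sum_shift (fun j => ladderX ξ j ω) 2 m]
    congr 1
    exact Finset.sum_congr rfl fun j hj => hstep j (Finset.mem_Icc.mp hj).1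
  have hS1 : ladderS ξ 1 ω = 1 := by rw [ladderS_one, if_pos h1]
  refine ladderB_shift_iff ξ (fun i => ξ (i + 2)) ω ω L U y y n 2 (by omega) ?_ ?_ ?_
  · intro m hm1 hmn
    rw [hS m, hS2]
    ring
  · intro l hl
    interval_cases l
    · rw [ladderS_zero]
      constructor <;> omega
    · rw [hS1]
      constructor <;> omega
  · left
    rw [hS2]
    ring
end Cor

section Pat

def ladderBval (b : Bool) : ℤ := if b then 1 else -1

def ladderPat (k : ℕ) (ε : Fin k → Bool) (n : ℕ) : ℤ :=
  if h : 1 ≤ n ∧ n ≤ k then ladderBval (ε ⟨n - 1, by omega⟩) else 1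

lemma patfn_val (k : ℕ) (ε : Fin k → Bool) (n : ℕ) : ladderPat k ε n = 1 ∨ ladderPat k ε n = -1 := by
  unfold ladderPat
  split
  · cases ε _ <;> simp [ladderBval]
  · left; rfl

lemma bval_ne (b : Bool) : ladderBval b ≠ 1 ∨ ladderBval b ≠ -1 := by cases b <;> simp [ladderBval]

lemma patfn_eq (k : ℕ) (ε : Fin k → Bool) (n : ℕ) (h1 : 1 ≤ n) (h2 : n ≤ k) :
    ladderPat k ε n = ladderBval (ε ⟨n - 1, by omega⟩) := by
  unfold ladderPat
  rw [dif_pos ⟨h1, h2⟩]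

lemma patfn_cons_one (k : ℕ) (b : Bool) (ε : Fin k → Bool) :
    ladderPat (k + 1) (Fin.cons b ε) 1 = ladderBval b := by
  rw [patfn_eq _ _ 1 le_rfl (by omega)]
  congr 1

lemma patfn_cons_shift (k : ℕ) (b : Bool) (ε : Fin k → Bool) (n : ℕ) (h1 : 1 ≤ n) (h2 : n ≤ k) :
    ladderPat (k + 1) (Fin.cons b ε) (n + 1) = ladderPat k ε n := by
  rw [patfn_eq _ _ (n + 1) (by omega) (by omega), patfn_eq _ _ n h1 h2]
  congr 1
  have : (⟨n + 1 - 1, by omega⟩ : Fin (k + 1)) = Fin.succ ⟨n - 1, by omega⟩ := by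
    ext; simp; omega
  rw [this, Fin.cons_succ]

end Pat

def ladderPb (L U x : ℤ) (k : ℕ) (σ : ℕ → ℤ) : Prop :=
  () ∈ ladderB (fun n (_ : Unit) => σ n) L U x k

def ladderPhi (p q : ℝ) (L U : ℤ) (j : ℕ) (y : ℤ) : ℝ≥0∞ :=
  ∑ ε : Fin j → Bool,
    if ladderPb L U y j (ladderPat j ε) then
      ∏ i : Fin j, (if ε i then ENNReal.ofReal p else ENNReal.ofReal q) else 0

section Master
variable {Ω : Type*} [MeasurableSpace Ω]

lemma ladder_master (p : ℝ) (hp0 : 0 ≤ p)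
    (P : Measure Ω) [IsProbabilityMeasure P]
    (ξ : ℕ → Ω → ℤ) (hmeas : ∀ n, Measurable (ξ n))
    (hindep : iIndepFun ξ P)
    (hval : ∀ n ω, ξ n ω = 1 ∨ ξ n ω = -1)
    (hprob : ∀ n, 1 ≤ n → P {ω | ξ n ω = 1} = ENNReal.ofReal p)
    (L U y : ℤ) (j : ℕ) :
    P (ladderB ξ L U y j) = ladderPhi p (1 - p) L U j y := by
  classical
  set C : (Fin j → Bool) → Set Ω :=
    fun ε => ⋂ i ∈ Finset.Icc 1 j, {ω | ξ i ω = ladderPat j ε i} with hCdef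
  have hCmeas : ∀ ε, MeasurableSet (C ε) := by
    intro ε
    refine MeasurableSet.biInter (Finset.Icc 1 j).countable_toSet fun i _ => ?_
    exact hmeas i (measurableSet_singleton (ladderPat j ε i))
  have hmemC : ∀ ε ω, ω ∈ C ε ↔ ∀ i, 1 ≤ i → i ≤ j → ξ i ω = ladderPat j ε i := by
    intro ε ω
    simp only [hCdef, Set.mem_iInter, Set.mem_setOf_eq, Finset.mem_Icc]
    constructor
    · intro h i h1 h2; exact h i ⟨h1, h2⟩
    · intro h i hi; exact h i hi.1 hi.2
  have hBC : ∀ ε ω, ω ∈ C ε → (ω ∈ ladderB ξ L U y j ↔ ladderPb L U y j (ladderPat j ε)) := by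
    intro ε ω hω
    exact mem_ladderB_congr fun i h1 h2 => (hmemC ε ω).mp hω i h1 h2
  have hcover : ∀ ω : Ω, ∃ ε, ω ∈ C ε := by
    intro ω
    refine ⟨fun i => decide (ξ (i.1 + 1) ω = 1), (hmemC _ ω).mpr fun i h1 h2 => ?_⟩
    rw [patfn_eq j _ i h1 h2]
    rcases hval i ω with h | h <;> rw [h]
    · have : i - 1 + 1 = i := by omega
      simp [ladderBval, this, h]
    · have : i - 1 + 1 = i := by omega
      simp [ladderBval, this, h]
  have hCdisj : ∀ ε ε', ε ≠ ε' → ∀ ω, ω ∈ C ε → ω ∈ C ε' → False := by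
    intro ε ε' hne ω h h'
    apply hne
    funext i
    have hlt := i.isLt
    have hle : i.1 + 1 ≤ j := by omega
    have e1 := (hmemC ε ω).mp h (i.1 + 1) (by omega) hle
    have e2 := (hmemC ε' ω).mp h' (i.1 + 1) (by omega) hle
    rw [patfn_eq j ε _ (by omega) hle] at e1
    rw [patfn_eq j ε' _ (by omega) hle] at e2
    have hii : (⟨i.1 + 1 - 1, by omega⟩ : Fin j) = i := by ext; simp
    rw [hii] at e1 e2
    have hbv : ladderBval (ε i) = ladderBval (ε' i) := by rw [← e1, ← e2]
    cases hε : ε i <;> cases hε' : ε' i <;> rw [hε, hε'] at hbv <;> simp [ladderBval] at hbv <;> rfl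
  set D : (Fin j → Bool) → Set Ω :=
    fun ε => if ladderPb L U y j (ladderPat j ε) then C ε else ∅ with hDdef
  have hBD : ladderB ξ L U y j = ⋃ ε ∈ (Finset.univ : Finset (Fin j → Bool)), D ε := by
    ext ω
    simp only [Set.mem_iUnion, Finset.mem_univ, exists_true_left, hDdef]
    constructor
    · intro h
      obtain ⟨ε, hε⟩ := hcover ω
      refine ⟨ε, ?_⟩
      rw [if_pos ((hBC ε ω hε).mp h)]
      exact hε
    · rintro ⟨ε, hε⟩
      by_cases hPb : ladderPb L U y j (ladderPat j ε)
      · rw [if_pos hPb] at hε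
        exact (hBC ε ω hε).mpr hPb
      · rw [if_neg hPb] at hε
        exact absurd hε (Set.notMem_empty ω)
  have hDmeas : ∀ ε, MeasurableSet (D ε) := by
    intro ε
    simp only [hDdef]
    split
    · exact hCmeas ε
    · exact MeasurableSet.empty
  have hDsub : ∀ ε, D ε ⊆ C ε := by
    intro ε
    simp only [hDdef]
    split
    · exact subset_rfl
    · exact Set.empty_subset _
  rw [hBD, measure_biUnion_finset ?_ (fun ε _ => hDmeas ε)]
  swap
  · intro ε _ ε' _ hne
    refine Set.disjoint_left.mpr fun {ω} hω hω' => ?_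
    exact hCdisj ε ε' hne ω (hDsub ε hω) (hDsub ε' hω')
  -- now compute each term
  unfold ladderPhi
  refine Finset.sum_congr rfl fun ε _ => ?_
  simp only [hDdef]
  split
  · -- P (C ε) = product
    have hPC : P (C ε) = ∏ i ∈ Finset.Icc 1 j, P {ω | ξ i ω = ladderPat j ε i} := by
      rw [hCdef]
      refine hindep.meas_biInter fun i _ => ?_
      exact ⟨{ladderPat j ε i}, measurableSet_singleton _, by ext ω; simp⟩
    rw [hPC]
    -- reindex the product
    refine Finset.prod_bij' (fun i hi => (⟨i - 1, by simp only [Finset.mem_Icc] at hi; omega⟩ : Fin j))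
      (fun b _ => b.1 + 1) ?_ ?_ ?_ ?_ ?_
    · intro a ha; exact Finset.mem_univ _
    · intro b _; simp only [Finset.mem_Icc]; omega
    · intro a ha
      simp only [Finset.mem_Icc] at ha
      show a - 1 + 1 = a
      omega
    · intro b _; ext; simp
    · intro a ha
      simp only [Finset.mem_Icc] at ha
      rw [patfn_eq j ε a ha.1 ha.2]
      cases hb : ε ⟨a - 1, by omega⟩
      · simp only [ladderBval, hb, if_false, Bool.false_eq_true]
        have hm1 : P {ω | ξ a ω = -1} = ENNReal.ofReal (1 - p) := by
          have hc : {ω | ξ a ω = -1} = {ω | ξ a ω = 1}ᶜ := by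
            ext ω
            simp only [Set.mem_setOf_eq, Set.mem_compl_iff]
            constructor
            · intro h h'; rw [h'] at h; norm_num at h
            · intro h; rcases hval a ω with h' | h'
              · exact absurd h' h
              · exact h'
          rw [hc, measure_compl (show MeasurableSet {ω | ξ a ω = 1} from
              hmeas a (measurableSet_singleton 1)) (measure_ne_top _ _),
            measure_univ, hprob a ha.1, ← ENNReal.ofReal_one, ← ENNReal.ofReal_sub _ hp0]
        exact hm1
      · simp only [ladderBval, hb, if_true]
        exact hprob a ha.1
  · exact measure_empty
end Master

section PbLemmas
variable {L U : ℤ}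

lemma PbA (y : ℤ) (hyL : L < y) (hyU : y < U) (n : ℕ) (ε : Fin n → Bool) :
    ladderPb L U y (n + 1) (ladderPat (n + 1) (Fin.cons false ε)) ↔ ladderPb L U (y - 1) n (ladderPat n ε) := by
  unfold ladderPb
  have h1 : ladderPat (n + 1) (Fin.cons false ε) 1 = -1 := by rw [patfn_cons_one]; rfl
  have key := ladder_corA (ξ := fun i (_ : Unit) => ladderPat (n + 1) (Fin.cons false ε) i) (ω := ())
      (fun i => patfn_val (n + 1) (Fin.cons false ε) i) h1 hyL hyU n
  exact key.trans (mem_ladderB_congr fun i hi1 hi2 => patfn_cons_shift n false ε i hi1 hi2)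

lemma PbB (y : ℤ) (hyL : L < y) (hyU : y + 2 < U) (n : ℕ) (τ : Fin (n + 1) → Bool)
    (hτ : τ 0 = true) :
    ladderPb L U y (n + 2) (ladderPat (n + 2) (Fin.cons true τ)) ↔ ladderPb L U (y + 2) (n + 1) (ladderPat (n + 1) τ) := by
  unfold ladderPb
  have h1 : ladderPat (n + 2) (Fin.cons true τ) 1 = 1 := by
    have := patfn_cons_one (n + 1) true τ
    exact this
  have h2 : ladderPat (n + 2) (Fin.cons true τ) 2 = 1 := by
    rw [patfn_eq _ _ 2 (by omega) (by omega)]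
    have e : (⟨2 - 1, by omega⟩ : Fin (n + 2)) = Fin.succ 0 := rfl
    rw [e, Fin.cons_succ, hτ]
    rfl
  have key := ladder_corB (ξ := fun i (_ : Unit) => ladderPat (n + 2) (Fin.cons true τ) i) (ω := ())
      (fun i => patfn_val (n + 2) (Fin.cons true τ) i) h1 h2 hyL hyU (n + 1)
  exact key.trans (mem_ladderB_congr fun i hi1 hi2 => by
    have := patfn_cons_shift (n + 1) true τ i hi1 hi2
    exact this)

lemma PbC (y : ℤ) (hyL : L < y) (hyU : y + 1 < U) (n : ℕ) (ε : Fin n → Bool) :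
    ladderPb L U y (n + 2) (ladderPat (n + 2) (Fin.cons true (Fin.cons false ε))) ↔ ladderPb L U y n (ladderPat n ε) := by
  unfold ladderPb
  have h1 : ladderPat (n + 2) (Fin.cons true (Fin.cons false ε)) 1 = 1 := by
    have := patfn_cons_one (n + 1) true (Fin.cons false ε)
    exact this
  have h2 : ladderPat (n + 2) (Fin.cons true (Fin.cons false ε)) 2 = -1 := by
    rw [patfn_eq _ _ 2 (by omega) (by omega)]
    have e : (⟨2 - 1, by omega⟩ : Fin (n + 2)) = Fin.succ 0 := rfl
    rw [e, Fin.cons_succ, Fin.cons_zero]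
    rfl
  have key := ladder_corC (ξ := fun i (_ : Unit) => ladderPat (n + 2) (Fin.cons true (Fin.cons false ε)) i)
      (ω := ()) (fun i => patfn_val (n + 2) (Fin.cons true (Fin.cons false ε)) i) h1 h2 hyL hyU n
  refine key.trans (mem_ladderB_congr fun i hi1 hi2 => ?_)
  show ladderPat (n + 1 + 1) (Fin.cons true (Fin.cons false ε)) (i + 1 + 1) = ladderPat n ε i
  rw [patfn_cons_shift (n + 1) true (Fin.cons false ε) (i + 1) (by omega) (by omega),
    patfn_cons_shift n false ε i hi1 hi2]
end PbLemmas

lemma ladder_sum_split {M : Type*} [AddCommMonoid M] (n : ℕ) (F : (Fin (n + 1) → Bool) → M) :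
    ∑ ε : Fin (n + 1) → Bool, F ε
      = (∑ ε : Fin n → Bool, F (Fin.cons true ε)) + ∑ ε : Fin n → Bool, F (Fin.cons false ε) := by
  rw [← Equiv.sum_comp (Fin.consEquiv (fun _ : Fin (n + 1) => Bool)) F, Fintype.sum_prod_type,
    Fintype.sum_bool]
  rfl

lemma ladderPhi_rec (p q : ℝ) (L U x : ℤ) (m : ℕ) (hx1 : L < x) (hx2 : x + 3 ≤ U) :
    ladderPhi p q L U (m + 2) x + ENNReal.ofReal p * ENNReal.ofReal q * ladderPhi p q L U m (x + 1)
      = ENNReal.ofReal q * ladderPhi p q L U (m + 1) (x - 1)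
        + ENNReal.ofReal p * ENNReal.ofReal q * ladderPhi p q L U m x
        + ENNReal.ofReal p * ladderPhi p q L U (m + 1) (x + 2) := by
  classical
  set P := ENNReal.ofReal p with hP
  set Q := ENNReal.ofReal q with hQ
  have phidef : ∀ (j : ℕ) (y : ℤ), ladderPhi p q L U j y
      = ∑ ε : Fin j → Bool,
          if ladderPb L U y j (ladderPat j ε) then ∏ i : Fin j, (if ε i then P else Q) else 0 :=
    fun j y => rfl
  have Wcons : ∀ (n : ℕ) (b : Bool) (ε : Fin n → Bool),
      (∏ i : Fin (n + 1), (if (Fin.cons b ε : Fin (n + 1) → Bool) i then P else Q))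
        = (if b then P else Q) * ∏ i : Fin n, (if ε i then P else Q) := by
    intro n b ε
    rw [Fin.prod_univ_succ]
    simp
  have split1 : ladderPhi p q L U (m + 2) x
      = (∑ ε : Fin (m + 1) → Bool,
          if ladderPb L U x (m + 2) (ladderPat (m + 2) (Fin.cons true ε)) then
            P * ∏ i : Fin (m + 1), (if ε i then P else Q) else 0)
        + Q * ladderPhi p q L U (m + 1) (x - 1) := by
    have e0 : ladderPhi p q L U (m + 2) x = ∑ ε : Fin (m + 1 + 1) → Bool,
        if ladderPb L U x (m + 2) (ladderPat (m + 2) ε) then ∏ i, (if ε i then P else Q) else 0 := rfl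
    rw [e0, ladder_sum_split (m + 1)]
    congr 1
    · refine Finset.sum_congr rfl fun ε _ => ?_
      have hw : (∏ i : Fin (m + 1 + 1), (if (Fin.cons true ε : Fin (m + 1 + 1) → Bool) i then P else Q))
          = P * ∏ i : Fin (m + 1), (if ε i then P else Q) := by
        rw [Wcons (m + 1) true ε]; rfl
      rw [hw]
    · rw [phidef (m + 1) (x - 1), Finset.mul_sum]
      refine Finset.sum_congr rfl fun ε _ => ?_
      rw [mul_ite, mul_zero]
      refine if_congr (by exact PbA x hx1 (by omega) (m + 1) ε) ?_ rfl
      rw [Wcons (m + 1) false ε]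
      norm_num
  have split2 : (∑ ε : Fin (m + 1) → Bool,
          if ladderPb L U x (m + 2) (ladderPat (m + 2) (Fin.cons true ε)) then
            P * ∏ i : Fin (m + 1), (if ε i then P else Q) else 0)
      = (∑ ε : Fin m → Bool,
          if ladderPb L U (x + 2) (m + 1) (ladderPat (m + 1) (Fin.cons true ε)) then
            P * (P * ∏ i : Fin m, (if ε i then P else Q)) else 0)
        + P * Q * ladderPhi p q L U m x := by
    rw [ladder_sum_split m]
    congr 1
    · refine Finset.sum_congr rfl fun ε _ => ?_
      refine if_congr (by exact PbB x hx1 (by omega) m (Fin.cons true ε) (by simp)) ?_ rfl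
      rw [Wcons m true ε]
      rfl
    · rw [phidef m x, Finset.mul_sum]
      refine Finset.sum_congr rfl fun ε _ => ?_
      rw [mul_ite, mul_zero]
      refine if_congr (by exact PbC x hx1 (by omega) m ε) ?_ rfl
      rw [Wcons m false ε]
      have hqq : (if false then P else Q) = Q := rfl
      rw [hqq]
      ring
  have split3 : P * ladderPhi p q L U (m + 1) (x + 2)
      = (∑ ε : Fin m → Bool,
          if ladderPb L U (x + 2) (m + 1) (ladderPat (m + 1) (Fin.cons true ε)) then
            P * (P * ∏ i : Fin m, (if ε i then P else Q)) else 0)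
        + P * Q * ladderPhi p q L U m (x + 1) := by
    have e0 : ladderPhi p q L U (m + 1) (x + 2) = ∑ ε : Fin (m + 1) → Bool,
        if ladderPb L U (x + 2) (m + 1) (ladderPat (m + 1) ε) then ∏ i, (if ε i then P else Q) else 0 := rfl
    rw [e0, ladder_sum_split m, mul_add]
    congr 1
    · rw [Finset.mul_sum]
      refine Finset.sum_congr rfl fun ε _ => ?_
      have hw : (∏ i : Fin (m + 1), (if (Fin.cons true ε : Fin (m + 1) → Bool) i then P else Q))
          = P * ∏ i : Fin m, (if ε i then P else Q) := by
        rw [Wcons m true ε]; rfl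
      rw [hw, mul_ite, mul_zero]
    · rw [phidef m (x + 1), Finset.mul_sum, Finset.mul_sum]
      refine Finset.sum_congr rfl fun ε _ => ?_
      rw [mul_ite, mul_zero, mul_ite, mul_zero]
      refine if_congr (by
        have h := PbA (L := L) (U := U) (x + 2) (by omega) (by omega) m ε
        rw [show x + 2 - 1 = x + 1 by ring] at h
        exact h) ?_ rfl
      rw [Wcons m false ε]
      have hqq : (if false then P else Q) = Q := rfl
      rw [hqq]
      ring
  rw [split1, split2, split3]
  ring

/-- For `k ≥ 2` and `L + 1 ≤ x ≤ U - 3`,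
`β_k(x) = pq·β_(k-2)(x) + p·β_(k-1)(x+2) - pq·β_(k-2)(x+1) + q·β_(k-1)(x-1)`. -/
theorem ladder_betak_rec_interior (p q : ℝ) (hp0 : 0 < p) (hp1 : p < 1) (hq : q = 1 - p)
    (P : Measure Ω) [IsProbabilityMeasure P]
    (ξ : ℕ → Ω → ℤ) (hmeas : ∀ n, Measurable (ξ n))
    (hindep : iIndepFun ξ P)
    (hval : ∀ n ω, ξ n ω = 1 ∨ ξ n ω = -1)
    (hprob : ∀ n, 1 ≤ n → P {ω | ξ n ω = 1} = ENNReal.ofReal p)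
    (L U : ℤ) (hLU : U - L ≥ 4) (k : ℕ) (hk : 2 ≤ k)
    (x : ℤ) (hx1 : L + 1 ≤ x) (hx2 : x ≤ U - 3) :
    (P (ladderB ξ L U x k)).toReal
      = p * q * (P (ladderB ξ L U x (k - 2))).toReal
        + p * (P (ladderB ξ L U (x + 2) (k - 1))).toReal
        - p * q * (P (ladderB ξ L U (x + 1) (k - 2))).toReal
        + q * (P (ladderB ξ L U (x - 1) (k - 1))).toReal := by
  subst hq
  obtain ⟨m, rfl⟩ : ∃ m, k = m + 2 := ⟨k - 2, by omega⟩
  rw [show m + 2 - 1 = m + 1 from rfl, show m + 2 - 2 = m from rfl]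
  have hp0' : (0 : ℝ) ≤ p := le_of_lt hp0
  have hq0 : (0 : ℝ) ≤ 1 - p := by linarith
  have hM := fun (y : ℤ) (j : ℕ) =>
    ladder_master p hp0' P ξ hmeas hindep hval hprob L U y j
  have key := ladderPhi_rec p (1 - p) L U x m (by omega) (by omega)
  rw [← hM x (m + 2), ← hM (x + 1) m, ← hM (x - 1) (m + 1), ← hM x m, ← hM (x + 2) (m + 1)]
    at key
  have neP : ∀ (y : ℤ) (j : ℕ), ENNReal.ofReal p * P (ladderB ξ L U y j) ≠ ⊤ :=
    fun y j => ENNReal.mul_ne_top ENNReal.ofReal_ne_top (measure_ne_top _ _)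
  have neQ : ∀ (y : ℤ) (j : ℕ), ENNReal.ofReal (1 - p) * P (ladderB ξ L U y j) ≠ ⊤ :=
    fun y j => ENNReal.mul_ne_top ENNReal.ofReal_ne_top (measure_ne_top _ _)
  have nePQ : ∀ (y : ℤ) (j : ℕ),
      ENNReal.ofReal p * ENNReal.ofReal (1 - p) * P (ladderB ξ L U y j) ≠ ⊤ :=
    fun y j => ENNReal.mul_ne_top
      (ENNReal.mul_ne_top ENNReal.ofReal_ne_top ENNReal.ofReal_ne_top) (measure_ne_top _ _)
  have htR := congrArg ENNReal.toReal key
  rw [ENNReal.toReal_add (measure_ne_top _ _) (nePQ _ _),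
      ENNReal.toReal_add (ENNReal.add_ne_top.mpr ⟨neQ _ _, nePQ _ _⟩) (neP _ _),
      ENNReal.toReal_add (neQ _ _) (nePQ _ _)] at htR
  simp only [ENNReal.toReal_mul, ENNReal.toReal_ofReal hp0',
    ENNReal.toReal_ofReal hq0] at htR
  linarith

end
end

section
/- Let m_k(x)=E[τ_k^x] for integers x with L ≤ x ≤ U, where U−L ≥ 4. Then for every k ≥ 2: m_k(U)=0; m_k(U−1)=1+q·m_{k−1}(U−2); m_k(U−2)=1+p+pq·m_{k−2}(U−2)+q·m_{k−1}(U−3); for every integer x with L+1 ≤ x ≤ U−3, m_k(x)=1+pq·m_{k−2}(x)+p·m_{k−1}(x+2)−pq·m_{k−2}(x+1)+q·m_{k−1}(x−1); and m_k(L)=0. -/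
open MeasureTheory ProbabilityTheory Filter
open scoped ENNReal Classical

noncomputable section

variable {Ω : Type*} [MeasurableSpace Ω]

namespace LadderAux

/-- deterministic step -/
def dX (σ : ℕ → ℤ) (k : ℕ) : ℤ :=
  if k = 1 then (if σ 1 = 1 then 1 else -1)
  else if σ k = -1 then -1
  else if σ (k - 1) = 1 then 2 else 1

def dS (σ : ℕ → ℤ) (n : ℕ) : ℤ := ∑ k ∈ Finset.Icc 1 n, dX σ k

def dTau (σ : ℕ → ℤ) (L U x : ℤ) (k : ℕ) : ℕ :=
  if ∃ l ≤ k, (x + dS σ l ≤ L ∨ U ≤ x + dS σ l)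
  then sInf {l | l ≤ k ∧ (x + dS σ l ≤ L ∨ U ≤ x + dS σ l)}
  else k

def shf (a : ℕ) (σ : ℕ → ℤ) : ℕ → ℤ := fun n => σ (n + a)

def pm1 (σ : ℕ → ℤ) : Prop := ∀ n, σ n = 1 ∨ σ n = -1

lemma dS_zero (σ : ℕ → ℤ) : dS σ 0 = 0 := by simp [dS]

lemma dS_succ (σ : ℕ → ℤ) (l : ℕ) : dS σ (l + 1) = dS σ l + dX σ (l + 1) := by
  rw [dS, dS, Finset.sum_Icc_succ_top (by omega)]

lemma dX_congr {σ σ' : ℕ → ℤ} {m : ℕ} (h : ∀ n, 1 ≤ n → n ≤ m → σ n = σ' n)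
    (j : ℕ) (hj1 : 1 ≤ j) (hjm : j ≤ m) : dX σ j = dX σ' j := by
  rcases eq_or_ne j 1 with rfl | hne
  · show (if (1:ℕ) = 1 then _ else _) = (if (1:ℕ) = 1 then _ else _)
    rw [if_pos rfl, if_pos rfl, h 1 le_rfl hjm]
  · simp only [dX, if_neg hne, h j hj1 hjm, h (j-1) (by omega) (by omega)]

lemma dS_congr {σ σ' : ℕ → ℤ} {m : ℕ} (h : ∀ n, 1 ≤ n → n ≤ m → σ n = σ' n)
    (l : ℕ) (hl : l ≤ m) : dS σ l = dS σ' l := by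
  unfold dS
  refine Finset.sum_congr rfl fun j hj => ?_
  simp only [Finset.mem_Icc] at hj
  exact dX_congr h j hj.1 (by omega)

lemma dTau_congr {σ σ' : ℕ → ℤ} {m : ℕ} (h : ∀ n, 1 ≤ n → n ≤ m → σ n = σ' n)
    (L U x : ℤ) (k : ℕ) (hk : k ≤ m) : dTau σ L U x k = dTau σ' L U x k := by
  have hs : ∀ l ≤ k, dS σ l = dS σ' l := fun l hl => dS_congr h l (le_trans hl hk)
  have : {l | l ≤ k ∧ (x + dS σ l ≤ L ∨ U ≤ x + dS σ l)}
      = {l | l ≤ k ∧ (x + dS σ' l ≤ L ∨ U ≤ x + dS σ' l)} := by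
    ext l; constructor <;> rintro ⟨h1, h2⟩ <;> exact ⟨h1, by rw [hs l h1] at *; tauto⟩
  unfold dTau
  rw [this]
  congr 1
  simp only [eq_iff_iff]
  constructor <;> rintro ⟨l, hl, h2⟩ <;> exact ⟨l, hl, by rw [hs l hl] at *; tauto⟩

/-- generic shift lemma for dTau -/
lemma dTau_shift {σ σ' : ℕ → ℤ} {L U x y : ℤ} {k t s : ℕ} (htk : t ≤ k)
    (h1 : ∀ l, l < t + s → ¬(x + dS σ l ≤ L ∨ U ≤ x + dS σ l))
    (h3 : ∀ l, l < s → ¬(y + dS σ' l ≤ L ∨ U ≤ y + dS σ' l))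
    (h2 : ∀ l, s ≤ l →
      ((x + dS σ (l + t) ≤ L ∨ U ≤ x + dS σ (l + t)) ↔ (y + dS σ' l ≤ L ∨ U ≤ y + dS σ' l))) :
    dTau σ L U x k = t + dTau σ' L U y (k - t) := by
  set A : Set ℕ := {l | l ≤ k ∧ (x + dS σ l ≤ L ∨ U ≤ x + dS σ l)} with hA
  set B : Set ℕ := {l | l ≤ k - t ∧ (y + dS σ' l ≤ L ∨ U ≤ y + dS σ' l)} with hB
  have hmemA : ∀ l, l ∈ A → t + s ≤ l := by
    intro l hl
    by_contra hc
    exact h1 l (by omega) hl.2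
  have hAB : ∀ l, l ∈ A ↔ (l - t ∈ B ∧ t + s ≤ l) := by
    intro l
    constructor
    · intro hl
      have hts := hmemA l hl
      have hlk : l ≤ k := hl.1
      refine ⟨⟨by omega, ?_⟩, hts⟩
      have := (h2 (l - t) (by omega)).mp
      rw [show l - t + t = l by omega] at this
      exact this hl.2
    · rintro ⟨hl, hts⟩
      have hlk : l - t ≤ k - t := hl.1
      refine ⟨by omega, ?_⟩
      have := (h2 (l - t) (by omega)).mpr hl.2
      rw [show l - t + t = l by omega] at this
      exact this
  have hmemB : ∀ l, l ∈ B → s ≤ l := by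
    intro l hl
    by_contra hc
    exact h3 l (by omega) hl.2
  have hBA : ∀ l, l ∈ B → l + t ∈ A := by
    intro l hl
    rw [hAB]
    constructor
    · rw [show l + t - t = l by omega]; exact hl
    · have := hmemB l hl; omega
  by_cases hne : A.Nonempty
  · obtain ⟨a, ha⟩ := hne
    have hBne : B.Nonempty := ⟨a - t, ((hAB a).mp ha).1⟩
    have hex : ∃ l ≤ k, (x + dS σ l ≤ L ∨ U ≤ x + dS σ l) := ⟨a, ha.1, ha.2⟩
    have hex' : ∃ l ≤ k - t, (y + dS σ' l ≤ L ∨ U ≤ y + dS σ' l) := by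
      obtain ⟨b, hb⟩ := hBne; exact ⟨b, hb.1, hb.2⟩
    rw [dTau, dTau, if_pos hex, if_pos hex']
    have h1' : sInf A ∈ A := Nat.sInf_mem ⟨a, ha⟩
    have h2' : sInf B ∈ B := Nat.sInf_mem hBne
    have le1 : sInf A ≤ t + sInf B := by
      have := hBA _ h2'
      calc sInf A ≤ sInf B + t := Nat.sInf_le this
        _ = t + sInf B := by omega
    have le2 : t + sInf B ≤ sInf A := by
      have hm := (hAB _).mp h1'
      have h5 := Nat.sInf_le hm.1
      have h6 := hm.2
      omega
    exact le_antisymm le1 le2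
  · have hBne : ¬ B.Nonempty := by
      rintro ⟨b, hb⟩
      exact hne ⟨b + t, hBA b hb⟩
    rw [dTau, dTau, if_neg, if_neg]
    · omega
    · rintro ⟨l, hl, h⟩; exact hBne ⟨l, hl, h⟩
    · rintro ⟨l, hl, h⟩; exact hne ⟨l, hl, h⟩


lemma dX_shift {σ : ℕ → ℤ} {a j : ℕ} (hj : 2 ≤ j) (ha : 1 ≤ a) :
    dX (shf a σ) j = dX σ (j + a) := by
  unfold dX shf
  rw [if_neg (show ¬ j = 1 by omega), if_neg (show ¬ j + a = 1 by omega),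
    show j - 1 + a = j + a - 1 by omega]

lemma dS_one (σ : ℕ → ℤ) : dS σ 1 = dX σ 1 := by
  rw [show (1:ℕ) = 0 + 1 from rfl, dS_succ, dS_zero, zero_add]

-- down step
lemma dS_down {σ : ℕ → ℤ} (hσ : pm1 σ) (h1 : σ 1 = -1) :
    ∀ l, 1 ≤ l → dS σ l = dS (shf 1 σ) (l - 1) - 1 := by
  intro l hl
  induction l with
  | zero => omega
  | succ m ih =>
    rcases Nat.lt_or_ge m 2 with hm | hm
    · interval_cases m
      · simp [dS_one, dS_zero, dX, h1]
      · rcases hσ 2 with h2 | h2 <;>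
          simp [show (2:ℕ) = 1 + 1 from rfl, dS_succ, dS_one, dS_zero, dX, shf, h1, h2]
    · have ihm := ih (by omega)
      rw [dS_succ, ihm, show m + 1 - 1 = (m - 1) + 1 by omega, dS_succ,
        show m - 1 + 1 = m by omega, dX_shift (by omega) le_rfl]
      ring

-- up-up steps
lemma dS_upup {σ : ℕ → ℤ} (h1 : σ 1 = 1) (h2 : σ 2 = 1) :
    ∀ l, 2 ≤ l → dS σ l = dS (shf 1 σ) (l - 1) + 2 := by
  intro l hl
  induction l with
  | zero => omega
  | succ m ih =>
    rcases Nat.lt_or_ge m 2 with hm | hm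
    · interval_cases m
      · omega
      · simp [show (2:ℕ) = 1 + 1 from rfl, dS_succ, dS_one, dS_zero, dX, shf, h1, h2]
    · have ihm := ih (by omega)
      rw [dS_succ, ihm, show m + 1 - 1 = (m - 1) + 1 by omega, dS_succ,
        show m - 1 + 1 = m by omega, dX_shift (by omega) le_rfl]
      ring

-- up-down steps
lemma dS_updown {σ : ℕ → ℤ} (hσ : pm1 σ) (h1 : σ 1 = 1) (h2 : σ 2 = -1) :
    ∀ l, 2 ≤ l → dS σ l = dS (shf 2 σ) (l - 2) := by
  intro l hl
  induction l with
  | zero => omega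
  | succ m ih =>
    rcases Nat.lt_or_ge m 3 with hm | hm
    · interval_cases m
      · omega
      · simp [show (2:ℕ) = 1 + 1 from rfl, dS_succ, dS_one, dS_zero, dX, shf, h1, h2]
      · rcases hσ 3 with h3 | h3 <;>
          simp [show (3:ℕ) = 1 + 1 + 1 from rfl, dS_succ, dS_one, dS_zero, dX, shf,
            h1, h2, h3]
    · have ihm := ih (by omega)
      rw [dS_succ, ihm, show m + 1 - 2 = (m - 2) + 1 by omega, dS_succ,
        show m - 2 + 1 = m - 1 by omega, dX_shift (by omega) (by omega),
        show m - 1 + 2 = m + 1 by omega]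

-- exit lemma
lemma dTau_exit {σ : ℕ → ℤ} {L U x : ℤ} {k t : ℕ} (htk : t ≤ k)
    (h1 : ∀ l, l < t → ¬(x + dS σ l ≤ L ∨ U ≤ x + dS σ l))
    (h2 : x + dS σ t ≤ L ∨ U ≤ x + dS σ t) : dTau σ L U x k = t := by
  have hex : ∃ l ≤ k, (x + dS σ l ≤ L ∨ U ≤ x + dS σ l) := ⟨t, htk, h2⟩
  rw [dTau, if_pos hex]
  have hne : {l | l ≤ k ∧ (x + dS σ l ≤ L ∨ U ≤ x + dS σ l)}.Nonempty := ⟨t, htk, h2⟩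
  have hmem := Nat.sInf_mem hne
  have hle : sInf {l | l ≤ k ∧ (x + dS σ l ≤ L ∨ U ≤ x + dS σ l)} ≤ t :=
    Nat.sInf_le ⟨htk, h2⟩
  by_contra hc
  exact h1 _ (by omega) hmem.2


section PLemmas

variable {σ : ℕ → ℤ} {L U x : ℤ} {k : ℕ}

lemma tau_boundary (h : x ≤ L ∨ U ≤ x) : dTau σ L U x k = 0 :=
  dTau_exit (Nat.zero_le k) (by omega) (by rw [dS_zero]; omega)

lemma tau_up_exit (h1 : σ 1 = 1) (hx : L < x ∧ x < U) (hU : U ≤ x + 1) (hk : 1 ≤ k) :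
    dTau σ L U x k = 1 := by
  have hS1 : dS σ 1 = 1 := by rw [dS_one]; simp [dX, h1]
  refine dTau_exit hk ?_ ?_
  · intro l hl
    interval_cases l
    rw [dS_zero]; omega
  · rw [hS1]; omega

lemma tau_upup_exit (hσ1 : σ 1 = 1) (hσ2 : σ 2 = 1) (hx : L < x ∧ x < U)
    (hx1 : L < x + 1 ∧ x + 1 < U) (hU : U ≤ x + 3) (hk : 2 ≤ k) :
    dTau σ L U x k = 2 := by
  have hS1 : dS σ 1 = 1 := by rw [dS_one]; simp [dX, hσ1]
  have hS2 : dS σ 2 = 3 := by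
    rw [show (2:ℕ) = 1 + 1 from rfl, dS_succ, hS1]
    simp [dX, hσ1, hσ2]
  refine dTau_exit hk ?_ ?_
  · intro l hl
    interval_cases l
    · rw [dS_zero]; omega
    · rw [hS1]; omega
  · rw [hS2]; omega

lemma tau_down (hσ : pm1 σ) (h1 : σ 1 = -1) (hx : L < x ∧ x < U) (hk : 1 ≤ k) :
    dTau σ L U x k = 1 + dTau (shf 1 σ) L U (x - 1) (k - 1) := by
  refine dTau_shift (t := 1) (s := 0) hk ?_ ?_ ?_
  · intro l hl
    interval_cases l
    rw [dS_zero]; omega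
  · omega
  · intro l _
    rw [show dS σ (l + 1) = dS (shf 1 σ) (l + 1 - 1) - 1 from dS_down hσ h1 _ (by omega),
      show l + 1 - 1 = l by omega]
    constructor <;> intro h <;> omega

lemma tau_upup (hσ1 : σ 1 = 1) (hσ2 : σ 2 = 1) (hx : L < x ∧ x < U)
    (hx1 : L < x + 1 ∧ x + 1 < U) (hx2 : L < x + 2 ∧ x + 2 < U) (hk : 1 ≤ k) :
    dTau σ L U x k = 1 + dTau (shf 1 σ) L U (x + 2) (k - 1) := by
  have hS1 : dS σ 1 = 1 := by rw [dS_one]; simp [dX, hσ1]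
  refine dTau_shift (t := 1) (s := 1) hk ?_ ?_ ?_
  · intro l hl
    interval_cases l
    · rw [dS_zero]; omega
    · rw [hS1]; omega
  · intro l hl
    interval_cases l
    rw [dS_zero]; omega
  · intro l hl
    rw [show dS σ (l + 1) = dS (shf 1 σ) (l + 1 - 1) + 2 from dS_upup hσ1 hσ2 _ (by omega),
      show l + 1 - 1 = l by omega]
    constructor <;> intro h <;> omega

lemma tau_updown (hσ : pm1 σ) (hσ1 : σ 1 = 1) (hσ2 : σ 2 = -1) (hx : L < x ∧ x < U)
    (hx1 : L < x + 1 ∧ x + 1 < U) (hk : 2 ≤ k) :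
    dTau σ L U x k = 2 + dTau (shf 2 σ) L U x (k - 2) := by
  have hS1 : dS σ 1 = 1 := by rw [dS_one]; simp [dX, hσ1]
  refine dTau_shift (t := 2) (s := 0) hk ?_ ?_ ?_
  · intro l hl
    interval_cases l
    · rw [dS_zero]; omega
    · rw [hS1]; omega
  · omega
  · intro l _
    rw [show dS σ (l + 2) = dS (shf 2 σ) (l + 2 - 2) from dS_updown hσ hσ1 hσ2 _ (by omega),
      show l + 2 - 2 = l by omega]

lemma dTau_le (σ : ℕ → ℤ) (L U x : ℤ) (k : ℕ) : dTau σ L U x k ≤ k := by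
  rw [dTau]
  split
  · next h =>
      obtain ⟨l, hl, hexit⟩ := h
      exact le_trans (Nat.sInf_le ⟨hl, hexit⟩) hl
  · exact le_refl k

end PLemmas


/-! ## Probability layer -/

def emb (m : ℕ) (b : Fin m → Bool) : ℕ → ℤ :=
  fun n => if h : n - 1 < m then (if b ⟨n - 1, h⟩ then 1 else -1) else 1

def wt (p q : ℝ) {m : ℕ} (b : Fin m → Bool) : ℝ := ∏ i, (if b i then p else q)

lemma emb_pm1 (m : ℕ) (b : Fin m → Bool) : pm1 (emb m b) := by
  intro n
  unfold emb
  split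
  · split
    · exact Or.inl rfl
    · exact Or.inr rfl
  · exact Or.inl rfl

lemma emb_spec (m : ℕ) (b : Fin m → Bool) {n : ℕ} (h1 : 1 ≤ n) (h2 : n ≤ m) :
    emb m b n = if b ⟨n - 1, by omega⟩ then 1 else -1 := dif_pos (by omega)

lemma wt_nonneg {p q : ℝ} (hp : 0 ≤ p) (hq : 0 ≤ q) {m : ℕ} (b : Fin m → Bool) :
    0 ≤ wt p q b :=
  Finset.prod_nonneg fun i _ => by split <;> assumption

lemma sum_cons (m : ℕ) (F : (Fin (m + 1) → Bool) → ℝ) :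
    ∑ b, F b = ∑ b' : Fin m → Bool, (F (Fin.cons true b') + F (Fin.cons false b')) := by
  rw [← Equiv.sum_comp (Fin.consEquiv (fun _ => Bool)) F, Fintype.sum_prod_type,
    Fintype.sum_bool, ← Finset.sum_add_distrib]
  rfl

lemma wt_cons (p q : ℝ) {m : ℕ} (c : Bool) (b : Fin m → Bool) :
    wt p q (Fin.cons c b) = (if c then p else q) * wt p q b := by
  unfold wt
  rw [Fin.prod_univ_succ, Fin.cons_zero]
  congr 1

lemma cons_mk {m : ℕ} (c : Bool) (b : Fin m → Bool) {n : ℕ} (h : n < m + 1) (h1 : 1 ≤ n) :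
    Fin.cons (α := fun _ => Bool) c b ⟨n, h⟩ = b ⟨n - 1, by omega⟩ := by
  have : (⟨n, h⟩ : Fin (m + 1)) = Fin.succ ⟨n - 1, by omega⟩ := by
    ext
    simp
    omega
  rw [this, Fin.cons_succ]

lemma emb_cons_one {m : ℕ} (c : Bool) (b : Fin m → Bool) :
    emb (m + 1) (Fin.cons c b) 1 = if c then 1 else -1 := by
  rw [emb_spec _ _ le_rfl (by omega)]
  have h0 : (⟨1 - 1, by omega⟩ : Fin (m + 1)) = 0 := by ext; simp
  rw [h0, Fin.cons_zero]

lemma emb_cons_shift {m : ℕ} (c : Bool) (b : Fin m → Bool) :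
    ∀ n, 1 ≤ n → n ≤ m → shf 1 (emb (m + 1) (Fin.cons c b)) n = emb m b n := by
  intro n h1 h2
  show emb (m + 1) (Fin.cons c b) (n + 1) = emb m b n
  rw [emb_spec _ _ (by omega) (by omega), emb_spec _ _ h1 h2]
  simp only [Nat.add_sub_cancel]
  rw [cons_mk c b (by omega) (by omega)]

/-- one-step decomposition at the level of weighted sums -/
lemma step1 (p q : ℝ) (m : ℕ) (f g₁ g₂ : (ℕ → ℤ) → ℝ)
    (hf : ∀ σ, pm1 σ → f σ = if σ 1 = 1 then g₁ (shf 1 σ) else g₂ (shf 1 σ))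
    (hg₁ : ∀ σ σ', (∀ n, 1 ≤ n → n ≤ m → σ n = σ' n) → g₁ σ = g₁ σ')
    (hg₂ : ∀ σ σ', (∀ n, 1 ≤ n → n ≤ m → σ n = σ' n) → g₂ σ = g₂ σ') :
    ∑ b : Fin (m + 1) → Bool, wt p q b * f (emb (m + 1) b)
      = p * (∑ b : Fin m → Bool, wt p q b * g₁ (emb m b))
        + q * (∑ b : Fin m → Bool, wt p q b * g₂ (emb m b)) := by
  rw [sum_cons, Finset.sum_add_distrib]
  congr 1
  · rw [Finset.mul_sum]
    refine Finset.sum_congr rfl fun b _ => ?_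
    rw [wt_cons, hf _ (emb_pm1 _ _), emb_cons_one]
    norm_num
    rw [hg₁ _ _ (emb_cons_shift true b)]
    ring
  · rw [Finset.mul_sum]
    refine Finset.sum_congr rfl fun b _ => ?_
    rw [wt_cons, hf _ (emb_pm1 _ _), emb_cons_one]
    norm_num
    rw [hg₂ _ _ (emb_cons_shift false b)]
    ring


open MeasureTheory

lemma master {Ω' : Type*} [MeasurableSpace Ω'] (P : Measure Ω') [IsProbabilityMeasure P]
    (p q : ℝ) (hp0 : 0 ≤ p) (hq0 : 0 ≤ q)
    (hpq : ENNReal.ofReal q = 1 - ENNReal.ofReal p)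
    (ξ : ℕ → Ω' → ℤ) (hmeas : ∀ n, Measurable (ξ n))
    (hindep : ProbabilityTheory.iIndepFun ξ P)
    (hval : ∀ n ω, ξ n ω = 1 ∨ ξ n ω = -1)
    (hprob : ∀ n, 1 ≤ n → P {ω | ξ n ω = 1} = ENNReal.ofReal p)
    (m : ℕ) (f : (ℕ → ℤ) → ℝ)
    (hdep : ∀ σ σ', (∀ n, 1 ≤ n → n ≤ m → σ n = σ' n) → f σ = f σ') :
    Integrable (fun ω => f (fun n => ξ n ω)) P ∧
    ∫ ω, f (fun n => ξ n ω) ∂P = ∑ b : Fin m → Bool, wt p q b * f (emb m b) := by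
  classical
  set A : (Fin m → Bool) → Set Ω' :=
    fun b => ⋂ n ∈ Finset.Icc 1 m, ξ n ⁻¹' {emb m b n} with hA
  have hAmeas : ∀ b, MeasurableSet (A b) := by
    intro b
    exact Finset.measurableSet_biInter _ fun n _ => (hmeas n) (measurableSet_singleton _)
  -- the one-point probabilities
  have hprob' : ∀ n, 1 ≤ n → ∀ c : ℤ, c = 1 ∨ c = -1 →
      P (ξ n ⁻¹' {c}) = ENNReal.ofReal (if c = 1 then p else q) := by
    intro n hn c hc
    rcases hc with rfl | rfl
    · rw [if_pos rfl]
      rw [show ξ n ⁻¹' {1} = {ω | ξ n ω = 1} from rfl]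
      exact hprob n hn
    · rw [if_neg (by norm_num)]
      have hcompl : ξ n ⁻¹' {-1} = {ω | ξ n ω = 1}ᶜ := by
        ext ω
        simp only [Set.mem_preimage, Set.mem_singleton_iff, Set.mem_compl_iff,
          Set.mem_setOf_eq]
        constructor
        · intro h h1
          rw [h1] at h
          norm_num at h
        · intro h
          rcases hval n ω with h1 | h1
          · exact absurd h1 h
          · exact h1
      rw [hcompl, prob_compl_eq_one_sub
        (show MeasurableSet {ω | ξ n ω = 1} from (hmeas n) (measurableSet_singleton 1)),
        hprob n hn, hpq]
  -- measure of a cylinder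
  have hmeasure : ∀ b, (P (A b)).toReal = wt p q b := by
    intro b
    have h1 : P (A b) = ∏ n ∈ Finset.Icc 1 m, P (ξ n ⁻¹' {emb m b n}) :=
      hindep.meas_biInter fun n _ => ⟨{emb m b n}, measurableSet_singleton _, rfl⟩
    have h2 : P (A b)
        = ENNReal.ofReal (∏ n ∈ Finset.Icc 1 m, (if emb m b n = 1 then p else q)) := by
      rw [h1, ENNReal.ofReal_prod_of_nonneg (fun i _ => by split <;> assumption)]
      refine Finset.prod_congr rfl fun n hn => ?_
      simp only [Finset.mem_Icc] at hn
      exact hprob' n hn.1 _ (emb_pm1 m b n)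
    have h3 : ∏ n ∈ Finset.Icc 1 m, (if emb m b n = 1 then p else q) = wt p q b := by
      unfold wt
      refine (Finset.prod_bij (fun (i : Fin m) _ => (i : ℕ) + 1) ?_ ?_ ?_ ?_).symm
      · intro a _
        simp only [Finset.mem_Icc]
        omega
      · intro a _ a' _ h
        exact Fin.ext (by omega)
      · intro n hn
        simp only [Finset.mem_Icc] at hn
        refine ⟨⟨n - 1, by omega⟩, Finset.mem_univ _, ?_⟩
        simp only []
        omega
      · intro i _
        rw [emb_spec m b (by omega) (by omega)]
        have hi : (⟨(i : ℕ) + 1 - 1, by omega⟩ : Fin m) = i := Fin.ext (by simp)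
        rw [hi]
        rcases Bool.dichotomy (b i) with hb | hb <;> rw [hb] <;> norm_num
    rw [h2, h3, ENNReal.toReal_ofReal (wt_nonneg hp0 hq0 b)]
  -- the pointwise partition
  set bw : Ω' → (Fin m → Bool) := fun ω i => decide (ξ ((i : ℕ) + 1) ω = 1) with hbw
  have hmemiff : ∀ ω b, ω ∈ A b ↔ ∀ n, 1 ≤ n → n ≤ m → ξ n ω = emb m b n := by
    intro ω b
    rw [hA]
    simp only [Set.mem_iInter, Set.mem_preimage, Set.mem_singleton_iff, Finset.mem_Icc]
    constructor
    · intro h n h1 h2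
      exact h n ⟨h1, h2⟩
    · intro h n hn
      exact h n hn.1 hn.2
  have hmem2 : ∀ ω, ∀ n, 1 ≤ n → n ≤ m → ξ n ω = emb m (bw ω) n := by
    intro ω n h1 h2
    rw [emb_spec m _ h1 h2]
    have hone : ((⟨n - 1, by omega⟩ : Fin m) : ℕ) + 1 = n := by simp; omega
    rcases hval n ω with hv | hv <;> simp [hbw, hone, hv]
  have hmemA : ∀ ω, ω ∈ A (bw ω) := fun ω => (hmemiff ω _).mpr (hmem2 ω)
  have hmem1 : ∀ ω b, ω ∈ A b → b = bw ω := by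
    intro ω b h
    funext i
    have := (hmemiff ω b).mp h ((i : ℕ) + 1) (by omega) (by omega)
    rw [emb_spec m b (by omega) (by omega)] at this
    have hi : (⟨(i : ℕ) + 1 - 1, by omega⟩ : Fin m) = i := Fin.ext (by simp)
    rw [hi] at this
    cases hb : b i
    · rw [hb] at this
      simp only [Bool.false_eq_true, if_false] at this
      simp [hbw, this]
    · rw [hb] at this
      simp only [if_pos rfl] at this
      simp [hbw, this]
  have hpt : (fun ω => f (fun n => ξ n ω))
      = fun ω => ∑ b : Fin m → Bool, (A b).indicator (fun _ => f (emb m b)) ω := by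
    funext ω
    rw [Finset.sum_eq_single (bw ω)]
    · rw [Set.indicator_of_mem (hmemA ω)]
      exact hdep _ _ (hmem2 ω)
    · intro b _ hb
      exact Set.indicator_of_notMem (fun hm' => hb (hmem1 ω b hm')) _
    · intro h
      exact absurd (Finset.mem_univ _) h
  have hintb : ∀ b : Fin m → Bool,
      Integrable ((A b).indicator (fun _ => f (emb m b))) P :=
    fun b => (integrable_const _).indicator (hAmeas b)
  constructor
  · rw [hpt]
    exact integrable_finset_sum _ fun b _ => hintb b
  · rw [hpt, integral_finset_sum _ fun b _ => hintb b]
    refine Finset.sum_congr rfl fun b _ => ?_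
    rw [integral_indicator_const _ (hAmeas b), smul_eq_mul, measureReal_def, hmeasure b]

end LadderAux


/-- The truncated mean durations `m_k(x) = E[τ_k^x]` satisfy
the linear difference system (23) of the paper, for every `k ≥ 2`. -/
theorem ladder_mk_rec (p q : ℝ) (hp0 : 0 < p) (hp1 : p < 1) (hq : q = 1 - p)
    (P : Measure Ω) [IsProbabilityMeasure P]
    (ξ : ℕ → Ω → ℤ) (hmeas : ∀ n, Measurable (ξ n))
    (hindep : iIndepFun ξ P)
    (hval : ∀ n ω, ξ n ω = 1 ∨ ξ n ω = -1)
    (hprob : ∀ n, 1 ≤ n → P {ω | ξ n ω = 1} = ENNReal.ofReal p)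
    (L U : ℤ) (hLU : U - L ≥ 4) (k : ℕ) (hk : 2 ≤ k) :
    (∫ ω, (ladderTau ξ L U U k ω : ℝ) ∂P) = 0 ∧
    (∫ ω, (ladderTau ξ L U (U - 1) k ω : ℝ) ∂P)
      = 1 + q * (∫ ω, (ladderTau ξ L U (U - 2) (k - 1) ω : ℝ) ∂P) ∧
    (∫ ω, (ladderTau ξ L U (U - 2) k ω : ℝ) ∂P)
      = 1 + p + p * q * (∫ ω, (ladderTau ξ L U (U - 2) (k - 2) ω : ℝ) ∂P)
        + q * (∫ ω, (ladderTau ξ L U (U - 3) (k - 1) ω : ℝ) ∂P) ∧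
    (∀ x : ℤ, L + 1 ≤ x → x ≤ U - 3 →
      (∫ ω, (ladderTau ξ L U x k ω : ℝ) ∂P)
        = 1 + p * q * (∫ ω, (ladderTau ξ L U x (k - 2) ω : ℝ) ∂P)
          + p * (∫ ω, (ladderTau ξ L U (x + 2) (k - 1) ω : ℝ) ∂P)
          - p * q * (∫ ω, (ladderTau ξ L U (x + 1) (k - 2) ω : ℝ) ∂P)
          + q * (∫ ω, (ladderTau ξ L U (x - 1) (k - 1) ω : ℝ) ∂P)) ∧
    (∫ ω, (ladderTau ξ L U L k ω : ℝ) ∂P) = 0 := by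
  classical
  obtain ⟨n, rfl⟩ : ∃ n, k = n + 2 := ⟨k - 2, by omega⟩
  have hq0 : (0:ℝ) ≤ q := by rw [hq]; linarith
  have hpq1 : p + q = 1 := by rw [hq]; ring
  have hpqE : ENNReal.ofReal q = 1 - ENNReal.ofReal p := by
    rw [hq, ENNReal.ofReal_sub 1 hp0.le, ENNReal.ofReal_one]
  have master' : ∀ (mm : ℕ) (f : (ℕ → ℤ) → ℝ),
      (∀ σ σ', (∀ i, 1 ≤ i → i ≤ mm → σ i = σ' i) → f σ = f σ') →
      Integrable (fun ω => f (fun i => ξ i ω)) P ∧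
      ∫ ω, f (fun i => ξ i ω) ∂P
        = ∑ b : Fin mm → Bool, LadderAux.wt p q b * f (LadderAux.emb mm b) :=
    fun mm f hdep => LadderAux.master P p q hp0.le hq0 hpqE ξ hmeas hindep hval hprob mm f hdep
  have hdepTau : ∀ (y : ℤ) (j mm : ℕ), j ≤ mm → ∀ σ σ',
      (∀ i, 1 ≤ i → i ≤ mm → σ i = σ' i) →
      ((LadderAux.dTau σ L U y j : ℕ) : ℝ) = ((LadderAux.dTau σ' L U y j : ℕ) : ℝ) :=
    fun y j mm hj σ σ' h => by rw [LadderAux.dTau_congr h L U y j hj]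
  have hint : ∀ (y : ℤ) (j : ℕ),
      Integrable (fun ω => ((LadderAux.dTau (fun i => ξ i ω) L U y j : ℕ) : ℝ)) P :=
    fun y j => (master' j _ (hdepTau y j j le_rfl)).1
  have hJ : ∀ (y : ℤ) (j : ℕ),
      ∫ ω, ((LadderAux.dTau (fun i => ξ i ω) L U y j : ℕ) : ℝ) ∂P
        = ∑ b : Fin j → Bool, LadderAux.wt p q b
            * ((LadderAux.dTau (LadderAux.emb j b) L U y j : ℕ) : ℝ) :=
    fun y j => (master' j _ (hdepTau y j j le_rfl)).2
  have hconst : ∀ (c : ℝ) (mm : ℕ),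
      ∑ b : Fin mm → Bool, LadderAux.wt p q b * (fun _ : ℕ → ℤ => c) (LadderAux.emb mm b)
        = c := by
    intro c mm
    rw [← (master' mm (fun _ => c) (fun _ _ _ => rfl)).2]
    simp
  have hpm1 : ∀ ω, LadderAux.pm1 (fun i => ξ i ω) := fun ω i => hval i ω
  refine ⟨?_, ?_, ?_, ?_, ?_⟩
  · -- x = U
    have hz : ∀ ω, ((ladderTau ξ L U U (n + 2) ω : ℕ) : ℝ) = 0 := by
      intro ω
      rw [show ladderTau ξ L U U (n + 2) ω
          = LadderAux.dTau (fun i => ξ i ω) L U U (n + 2) from rfl,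
        LadderAux.tau_boundary (Or.inr le_rfl)]
      norm_num
    simp [hz]
  · -- x = U - 1
    show (∫ ω, ((LadderAux.dTau (fun i => ξ i ω) L U (U - 1) (n + 2) : ℕ) : ℝ) ∂P)
      = 1 + q * ∫ ω, ((LadderAux.dTau (fun i => ξ i ω) L U (U - 2) (n + 1) : ℕ) : ℝ) ∂P
    set g₂ : (ℕ → ℤ) → ℝ :=
      fun τ => 1 + ((LadderAux.dTau τ L U (U - 2) (n + 1) : ℕ) : ℝ) with hg₂def
    have hdepg₂ : ∀ σ σ', (∀ i, 1 ≤ i → i ≤ n + 1 → σ i = σ' i) → g₂ σ = g₂ σ' := by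
      intro σ σ' h
      rw [hg₂def]
      simp only []
      rw [LadderAux.dTau_congr h L U (U - 2) (n + 1) le_rfl]
    have hf : ∀ σ, LadderAux.pm1 σ →
        ((LadderAux.dTau σ L U (U - 1) (n + 2) : ℕ) : ℝ)
          = if σ 1 = 1 then (fun _ : ℕ → ℤ => (1:ℝ)) (LadderAux.shf 1 σ)
            else g₂ (LadderAux.shf 1 σ) := by
      intro σ hσ
      by_cases h1 : σ 1 = 1
      · rw [if_pos h1, LadderAux.tau_up_exit h1 ⟨by omega, by omega⟩ (by omega) (by omega)]
        norm_num
      · have h1' : σ 1 = -1 := (hσ 1).resolve_left h1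
        rw [if_neg h1, LadderAux.tau_down hσ h1' ⟨by omega, by omega⟩ (by omega),
          show U - 1 - 1 = U - 2 by ring, show n + 2 - 1 = n + 1 by omega, hg₂def]
        push_cast
        ring
    have e1 := (master' (n + 2) _ (hdepTau (U - 1) (n + 2) (n + 2) le_rfl)).2
    have e2 := LadderAux.step1 p q (n + 1)
      (fun σ => ((LadderAux.dTau σ L U (U - 1) (n + 2) : ℕ) : ℝ))
      (fun _ => (1:ℝ)) g₂ hf (fun _ _ _ => rfl) hdepg₂
    have e3 := hconst 1 (n + 1)
    have e4 : ∑ b : Fin (n + 1) → Bool, LadderAux.wt p q b * g₂ (LadderAux.emb (n + 1) b)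
        = 1 + ∫ ω, ((LadderAux.dTau (fun i => ξ i ω) L U (U - 2) (n + 1) : ℕ) : ℝ) ∂P := by
      rw [← (master' (n + 1) g₂ hdepg₂).2, hg₂def]
      rw [integral_add (integrable_const 1) (hint (U - 2) (n + 1))]
      simp
    rw [e1, e2, e3, e4]
    linear_combination hpq1
  · -- x = U - 2
    show (∫ ω, ((LadderAux.dTau (fun i => ξ i ω) L U (U - 2) (n + 2) : ℕ) : ℝ) ∂P)
      = 1 + p + p * q * (∫ ω, ((LadderAux.dTau (fun i => ξ i ω) L U (U - 2) n : ℕ) : ℝ) ∂P)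
        + q * ∫ ω, ((LadderAux.dTau (fun i => ξ i ω) L U (U - 3) (n + 1) : ℕ) : ℝ) ∂P
    set g₁ : (ℕ → ℤ) → ℝ :=
      fun τ => if τ 1 = 1 then (2:ℝ)
        else 2 + ((LadderAux.dTau (LadderAux.shf 1 τ) L U (U - 2) n : ℕ) : ℝ) with hg₁def
    set g₂ : (ℕ → ℤ) → ℝ :=
      fun τ => 1 + ((LadderAux.dTau τ L U (U - 3) (n + 1) : ℕ) : ℝ) with hg₂def
    have hdepg₁ : ∀ σ σ', (∀ i, 1 ≤ i → i ≤ n + 1 → σ i = σ' i) → g₁ σ = g₁ σ' := by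
      intro σ σ' h
      rw [hg₁def]
      simp only []
      rw [h 1 le_rfl (by omega)]
      by_cases hc : σ' 1 = 1
      · rw [if_pos hc, if_pos hc]
      · rw [if_neg hc, if_neg hc,
          LadderAux.dTau_congr (σ := LadderAux.shf 1 σ) (σ' := LadderAux.shf 1 σ') (m := n)
            (fun i hi1 hi2 => h (i + 1) (by omega) (by omega)) L U (U - 2) n le_rfl]
    have hdepg₂ : ∀ σ σ', (∀ i, 1 ≤ i → i ≤ n + 1 → σ i = σ' i) → g₂ σ = g₂ σ' := by
      intro σ σ' h
      rw [hg₂def]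
      simp only []
      rw [LadderAux.dTau_congr h L U (U - 3) (n + 1) le_rfl]
    have hf : ∀ σ, LadderAux.pm1 σ →
        ((LadderAux.dTau σ L U (U - 2) (n + 2) : ℕ) : ℝ)
          = if σ 1 = 1 then g₁ (LadderAux.shf 1 σ) else g₂ (LadderAux.shf 1 σ) := by
      intro σ hσ
      by_cases h1 : σ 1 = 1
      · rw [if_pos h1, hg₁def]
        simp only []
        by_cases h2 : σ 2 = 1
        · rw [if_pos (show LadderAux.shf 1 σ 1 = 1 from h2),
            LadderAux.tau_upup_exit h1 h2 ⟨by omega, by omega⟩ ⟨by omega, by omega⟩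
              (by omega) (by omega)]
          norm_num
        · have h2' : σ 2 = -1 := (hσ 2).resolve_left h2
          rw [if_neg (show ¬ LadderAux.shf 1 σ 1 = 1 from h2),
            LadderAux.tau_updown hσ h1 h2' ⟨by omega, by omega⟩ ⟨by omega, by omega⟩
              (by omega), show n + 2 - 2 = n by omega,
            show LadderAux.shf 1 (LadderAux.shf 1 σ) = LadderAux.shf 2 σ from rfl]
          push_cast
          ring
      · have h1' : σ 1 = -1 := (hσ 1).resolve_left h1
        rw [if_neg h1, LadderAux.tau_down hσ h1' ⟨by omega, by omega⟩ (by omega),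
          show U - 2 - 1 = U - 3 by ring, show n + 2 - 1 = n + 1 by omega, hg₂def]
        push_cast
        ring
    have hfg₁ : ∀ τ, LadderAux.pm1 τ →
        g₁ τ = if τ 1 = 1 then (fun _ : ℕ → ℤ => (2:ℝ)) (LadderAux.shf 1 τ)
          else (fun ρ => 2 + ((LadderAux.dTau ρ L U (U - 2) n : ℕ) : ℝ)) (LadderAux.shf 1 τ) := by
      intro τ _
      rfl
    have hdeph₂ : ∀ σ σ', (∀ i, 1 ≤ i → i ≤ n → σ i = σ' i) →
        (fun ρ => 2 + ((LadderAux.dTau ρ L U (U - 2) n : ℕ) : ℝ)) σ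
          = (fun ρ => 2 + ((LadderAux.dTau ρ L U (U - 2) n : ℕ) : ℝ)) σ' := by
      intro σ σ' h
      simp only []
      rw [LadderAux.dTau_congr h L U (U - 2) n le_rfl]
    have e1 := (master' (n + 2) _ (hdepTau (U - 2) (n + 2) (n + 2) le_rfl)).2
    have e2 := LadderAux.step1 p q (n + 1)
      (fun σ => ((LadderAux.dTau σ L U (U - 2) (n + 2) : ℕ) : ℝ)) g₁ g₂ hf hdepg₁ hdepg₂
    have e5 := LadderAux.step1 p q n g₁ (fun _ => (2:ℝ))
      (fun ρ => 2 + ((LadderAux.dTau ρ L U (U - 2) n : ℕ) : ℝ)) hfg₁ (fun _ _ _ => rfl) hdeph₂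
    have e6 := hconst 2 n
    have e7 : ∑ b : Fin n → Bool, LadderAux.wt p q b
          * (fun ρ => 2 + ((LadderAux.dTau ρ L U (U - 2) n : ℕ) : ℝ)) (LadderAux.emb n b)
        = 2 + ∫ ω, ((LadderAux.dTau (fun i => ξ i ω) L U (U - 2) n : ℕ) : ℝ) ∂P := by
      rw [← (master' n _ hdeph₂).2]
      rw [integral_add (integrable_const 2) (hint (U - 2) n)]
      simp
    have e4 : ∑ b : Fin (n + 1) → Bool, LadderAux.wt p q b * g₂ (LadderAux.emb (n + 1) b)
        = 1 + ∫ ω, ((LadderAux.dTau (fun i => ξ i ω) L U (U - 3) (n + 1) : ℕ) : ℝ) ∂P := by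
      rw [← (master' (n + 1) g₂ hdepg₂).2, hg₂def]
      rw [integral_add (integrable_const 1) (hint (U - 3) (n + 1))]
      simp
    rw [e1, e2, e5, e6, e7, e4]
    linear_combination (2 * p + 1) * hpq1
  · -- interior x
    intro x hxL hxU
    show (∫ ω, ((LadderAux.dTau (fun i => ξ i ω) L U x (n + 2) : ℕ) : ℝ) ∂P)
      = 1 + p * q * (∫ ω, ((LadderAux.dTau (fun i => ξ i ω) L U x n : ℕ) : ℝ) ∂P)
        + p * (∫ ω, ((LadderAux.dTau (fun i => ξ i ω) L U (x + 2) (n + 1) : ℕ) : ℝ) ∂P)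
        - p * q * (∫ ω, ((LadderAux.dTau (fun i => ξ i ω) L U (x + 1) n : ℕ) : ℝ) ∂P)
        + q * ∫ ω, ((LadderAux.dTau (fun i => ξ i ω) L U (x - 1) (n + 1) : ℕ) : ℝ) ∂P
    set g₁ : (ℕ → ℤ) → ℝ :=
      fun τ => if τ 1 = 1 then 1 + ((LadderAux.dTau τ L U (x + 2) (n + 1) : ℕ) : ℝ)
        else 2 + ((LadderAux.dTau (LadderAux.shf 1 τ) L U x n : ℕ) : ℝ) with hg₁def
    set g₂ : (ℕ → ℤ) → ℝ :=
      fun τ => 1 + ((LadderAux.dTau τ L U (x - 1) (n + 1) : ℕ) : ℝ) with hg₂def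
    set r : (ℕ → ℤ) → ℝ :=
      fun τ => if τ 1 = 1 then (1:ℝ)
        else 1 + ((LadderAux.dTau (LadderAux.shf 1 τ) L U x n : ℕ) : ℝ)
          - ((LadderAux.dTau (LadderAux.shf 1 τ) L U (x + 1) n : ℕ) : ℝ) with hrdef
    set c₂ : (ℕ → ℤ) → ℝ :=
      fun ρ => 1 + ((LadderAux.dTau ρ L U x n : ℕ) : ℝ)
        - ((LadderAux.dTau ρ L U (x + 1) n : ℕ) : ℝ) with hc₂def
    have hdepg₁ : ∀ σ σ', (∀ i, 1 ≤ i → i ≤ n + 1 → σ i = σ' i) → g₁ σ = g₁ σ' := by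
      intro σ σ' h
      rw [hg₁def]
      simp only []
      rw [h 1 le_rfl (by omega)]
      by_cases hc : σ' 1 = 1
      · rw [if_pos hc, if_pos hc,
          LadderAux.dTau_congr h L U (x + 2) (n + 1) le_rfl]
      · rw [if_neg hc, if_neg hc,
          LadderAux.dTau_congr (σ := LadderAux.shf 1 σ) (σ' := LadderAux.shf 1 σ') (m := n)
            (fun i hi1 hi2 => h (i + 1) (by omega) (by omega)) L U x n le_rfl]
    have hdepg₂ : ∀ σ σ', (∀ i, 1 ≤ i → i ≤ n + 1 → σ i = σ' i) → g₂ σ = g₂ σ' := by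
      intro σ σ' h
      rw [hg₂def]
      simp only []
      rw [LadderAux.dTau_congr h L U (x - 1) (n + 1) le_rfl]
    have hdepc₂ : ∀ σ σ', (∀ i, 1 ≤ i → i ≤ n → σ i = σ' i) → c₂ σ = c₂ σ' := by
      intro σ σ' h
      rw [hc₂def]
      simp only []
      rw [LadderAux.dTau_congr h L U x n le_rfl,
        LadderAux.dTau_congr h L U (x + 1) n le_rfl]
    have hf : ∀ σ, LadderAux.pm1 σ →
        ((LadderAux.dTau σ L U x (n + 2) : ℕ) : ℝ)
          = if σ 1 = 1 then g₁ (LadderAux.shf 1 σ) else g₂ (LadderAux.shf 1 σ) := by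
      intro σ hσ
      by_cases h1 : σ 1 = 1
      · rw [if_pos h1, hg₁def]
        simp only []
        by_cases h2 : σ 2 = 1
        · rw [if_pos (show LadderAux.shf 1 σ 1 = 1 from h2),
            LadderAux.tau_upup h1 h2 ⟨by omega, by omega⟩ ⟨by omega, by omega⟩
              ⟨by omega, by omega⟩ (by omega), show n + 2 - 1 = n + 1 by omega]
          push_cast
          ring
        · have h2' : σ 2 = -1 := (hσ 2).resolve_left h2
          rw [if_neg (show ¬ LadderAux.shf 1 σ 1 = 1 from h2),
            LadderAux.tau_updown hσ h1 h2' ⟨by omega, by omega⟩ ⟨by omega, by omega⟩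
              (by omega), show n + 2 - 2 = n by omega,
            show LadderAux.shf 1 (LadderAux.shf 1 σ) = LadderAux.shf 2 σ from rfl]
          push_cast
          ring
      · have h1' : σ 1 = -1 := (hσ 1).resolve_left h1
        rw [if_neg h1, LadderAux.tau_down hσ h1' ⟨by omega, by omega⟩ (by omega),
          show n + 2 - 1 = n + 1 by omega, hg₂def]
        push_cast
        ring
    have hsplit : ∀ τ, LadderAux.pm1 τ →
        g₁ τ = ((LadderAux.dTau τ L U (x + 2) (n + 1) : ℕ) : ℝ) + r τ := by
      intro τ hτ
      rw [hg₁def, hrdef]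
      simp only []
      by_cases hc : τ 1 = 1
      · rw [if_pos hc, if_pos hc]
        ring
      · have hc' : τ 1 = -1 := (hτ 1).resolve_left hc
        rw [if_neg hc, if_neg hc,
          LadderAux.tau_down hτ hc' ⟨by omega, by omega⟩ (by omega),
          show x + 2 - 1 = x + 1 by ring, show n + 1 - 1 = n by omega]
        push_cast
        ring
    have hfr : ∀ τ, LadderAux.pm1 τ →
        r τ = if τ 1 = 1 then (fun _ : ℕ → ℤ => (1:ℝ)) (LadderAux.shf 1 τ)
          else c₂ (LadderAux.shf 1 τ) := by
      intro τ _
      rfl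
    have e1 := (master' (n + 2) _ (hdepTau x (n + 2) (n + 2) le_rfl)).2
    have e2 := LadderAux.step1 p q (n + 1)
      (fun σ => ((LadderAux.dTau σ L U x (n + 2) : ℕ) : ℝ)) g₁ g₂ hf hdepg₁ hdepg₂
    have eA : ∑ b : Fin (n + 1) → Bool, LadderAux.wt p q b * g₁ (LadderAux.emb (n + 1) b)
        = (∫ ω, ((LadderAux.dTau (fun i => ξ i ω) L U (x + 2) (n + 1) : ℕ) : ℝ) ∂P)
          + ∑ b : Fin (n + 1) → Bool, LadderAux.wt p q b * r (LadderAux.emb (n + 1) b) := by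
      rw [Finset.sum_congr rfl (fun b _ => show LadderAux.wt p q b * g₁ (LadderAux.emb (n+1) b)
          = LadderAux.wt p q b * ((LadderAux.dTau (LadderAux.emb (n+1) b) L U (x + 2) (n + 1) : ℕ) : ℝ)
            + LadderAux.wt p q b * r (LadderAux.emb (n+1) b) from by
        rw [hsplit _ (LadderAux.emb_pm1 _ _)]; ring), Finset.sum_add_distrib, hJ (x + 2) (n + 1)]
    have eR := LadderAux.step1 p q n r (fun _ => (1:ℝ)) c₂ hfr (fun _ _ _ => rfl) hdepc₂
    have eC := hconst 1 n
    have eD : ∑ b : Fin n → Bool, LadderAux.wt p q b * c₂ (LadderAux.emb n b)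
        = 1 + (∫ ω, ((LadderAux.dTau (fun i => ξ i ω) L U x n : ℕ) : ℝ) ∂P)
          - ∫ ω, ((LadderAux.dTau (fun i => ξ i ω) L U (x + 1) n : ℕ) : ℝ) ∂P := by
      rw [← (master' n c₂ hdepc₂).2, hc₂def]
      have hInt1 : Integrable
          (fun ω => 1 + ((LadderAux.dTau (fun i => ξ i ω) L U x n : ℕ) : ℝ)) P :=
        (integrable_const 1).add (hint x n)
      rw [integral_sub hInt1 (hint (x + 1) n),
        integral_add (integrable_const 1) (hint x n)]
      simp
    have eB : ∑ b : Fin (n + 1) → Bool, LadderAux.wt p q b * g₂ (LadderAux.emb (n + 1) b)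
        = 1 + ∫ ω, ((LadderAux.dTau (fun i => ξ i ω) L U (x - 1) (n + 1) : ℕ) : ℝ) ∂P := by
      rw [← (master' (n + 1) g₂ hdepg₂).2, hg₂def]
      rw [integral_add (integrable_const 1) (hint (x - 1) (n + 1))]
      simp
    rw [e1, e2, eA, eR, eC, eD, eB]
    linear_combination (p + 1) * hpq1
  · -- x = L
    have hz : ∀ ω, ((ladderTau ξ L U L (n + 2) ω : ℕ) : ℝ) = 0 := by
      intro ω
      rw [show ladderTau ξ L U L (n + 2) ω
          = LadderAux.dTau (fun i => ξ i ω) L U L (n + 2) from rfl,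
        LadderAux.tau_boundary (Or.inl le_rfl)]
      norm_num
    simp [hz]


end
end

section
/- Suppose p ≠ √2−1 (equivalently p²+2p−1 ≠ 0). Then for every n ≥ 1 and every integer x with L ≤ x ≤ U (where U−L ≥ 4), E[τ_n^x] ≤ 1 + (2·max{|L|,|U|} + 2|p−q| + |2p−q|)/|p²+2p−1|. -/
open MeasureTheory ProbabilityTheory Filter
open scoped ENNReal Classical

noncomputable section

variable {Ω : Type*} [MeasurableSpace Ω]

namespace LadderAux

set_option linter.unusedSectionVars false

/-- The exit predicate at time `l`. -/
def Ex (ξ : ℕ → Ω → ℤ) (L U x : ℤ) (l : ℕ) (ω : Ω) : Prop :=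
  x + ladderS ξ l ω ≤ L ∨ U ≤ x + ladderS ξ l ω

/-- No exit through time `n`. -/
def AA (ξ : ℕ → Ω → ℤ) (L U x : ℤ) (n : ℕ) : Set Ω :=
  {ω | ∀ l ≤ n, ¬ Ex ξ L U x l ω}

/-- The event `{ξ k = 1}`. -/
def CC (ξ : ℕ → Ω → ℤ) (k : ℕ) : Set Ω := {ω | ξ k ω = 1}

/-- The event `{τ_n < n and ξ_{τ_n} = 1}`. -/
def DD (ξ : ℕ → Ω → ℤ) (L U x : ℤ) (n : ℕ) : Set Ω :=
  {ω | ladderTau ξ L U x n ω < n ∧ ξ (ladderTau ξ L U x n ω) ω = 1}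

variable {ξ : ℕ → Ω → ℤ} {L U x : ℤ}

lemma ladderTau_def (k : ℕ) (ω : Ω) :
    ladderTau ξ L U x k ω =
      if ∃ l ≤ k, Ex ξ L U x l ω then sInf {l | l ≤ k ∧ Ex ξ L U x l ω} else k := by
  unfold ladderTau Ex
  by_cases h : ∃ l ≤ k, x + ladderS ξ l ω ≤ L ∨ U ≤ x + ladderS ξ l ω <;> simp [h]

lemma mem_AA_iff {n : ℕ} {ω : Ω} : ω ∈ AA ξ L U x n ↔ ∀ l ≤ n, ¬ Ex ξ L U x l ω := Iff.rfl

lemma ladderS_zero (ω : Ω) : ladderS ξ 0 ω = 0 := by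
  simp [ladderS]

lemma ladderS_succ (n : ℕ) (ω : Ω) :
    ladderS ξ (n + 1) ω = ladderS ξ n ω + ladderX ξ (n + 1) ω :=
  Finset.sum_Icc_succ_top (by omega) _

lemma ladderX_bounds (k : ℕ) (ω : Ω) : -1 ≤ ladderX ξ k ω ∧ ladderX ξ k ω ≤ 2 := by
  unfold ladderX; split_ifs <;> omega

lemma tau_le (k : ℕ) (ω : Ω) : ladderTau ξ L U x k ω ≤ k := by
  rw [ladderTau_def]
  split_ifs with h
  · obtain ⟨l, hl, hEx⟩ := h
    exact le_trans (Nat.sInf_le ⟨hl, hEx⟩) hl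
  · exact le_rfl

lemma not_ex_of_lt_tau {k : ℕ} {ω : Ω} {l : ℕ} (h : l < ladderTau ξ L U x k ω) :
    ¬ Ex ξ L U x l ω := by
  rw [ladderTau_def] at h
  split_ifs at h with hc
  · intro hEx
    obtain ⟨l₀, hl₀, hEx₀⟩ := hc
    have h1 : sInf {l | l ≤ k ∧ Ex ξ L U x l ω} ≤ l₀ := Nat.sInf_le ⟨hl₀, hEx₀⟩
    have h2 : sInf {l | l ≤ k ∧ Ex ξ L U x l ω} ≤ l := Nat.sInf_le ⟨by omega, hEx⟩
    omega
  · push_neg at hc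
    exact hc l (by omega)

lemma tau_eq_of_noexit {k : ℕ} {ω : Ω} (h : ∀ l < k, ¬ Ex ξ L U x l ω) :
    ladderTau ξ L U x k ω = k := by
  rw [ladderTau_def]
  split_ifs with hc
  · have hne : {l | l ≤ k ∧ Ex ξ L U x l ω}.Nonempty := by
      obtain ⟨l, hl, hEx⟩ := hc; exact ⟨l, hl, hEx⟩
    have hmem := Nat.sInf_mem hne
    have h1 : sInf {l | l ≤ k ∧ Ex ξ L U x l ω} ≤ k := hmem.1
    have h2 : Ex ξ L U x (sInf {l | l ≤ k ∧ Ex ξ L U x l ω}) ω := hmem.2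
    by_contra hne'
    exact h _ (by omega) h2
  · rfl

lemma tau_zero (ω : Ω) : ladderTau ξ L U x 0 ω = 0 := by
  rw [ladderTau_def]
  split_ifs with h
  · obtain ⟨l, hl, hE⟩ := h
    have hl0 : l = 0 := by omega
    subst hl0
    exact Nat.sInf_eq_zero.mpr (Or.inl ⟨le_rfl, hE⟩)
  · rfl

lemma tau_eq_zero_of_boundary (hb : x ≤ L ∨ U ≤ x) (k : ℕ) (ω : Ω) :
    ladderTau ξ L U x k ω = 0 := by
  have hE : Ex ξ L U x 0 ω := by
    unfold Ex; rw [ladderS_zero]; omega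
  rw [ladderTau_def, if_pos ⟨0, Nat.zero_le k, hE⟩]
  exact Nat.sInf_eq_zero.mpr (Or.inl ⟨Nat.zero_le k, hE⟩)

lemma tau_succ (n : ℕ) (ω : Ω) :
    ladderTau ξ L U x (n + 1) ω
      = ladderTau ξ L U x n ω + (if ω ∈ AA ξ L U x n then 1 else 0) := by
  by_cases hA : ω ∈ AA ξ L U x n
  · have h1 : ladderTau ξ L U x (n + 1) ω = n + 1 :=
      tau_eq_of_noexit (fun l hl => hA l (by omega))
    have h2 : ladderTau ξ L U x n ω = n :=
      tau_eq_of_noexit (fun l hl => hA l (by omega))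
    rw [h1, h2, if_pos hA]
  · have hex : ∃ l ≤ n, Ex ξ L U x l ω := by
      by_contra hc; push_neg at hc; exact hA hc
    obtain ⟨l₀, hl₀, hE₀⟩ := hex
    rw [if_neg hA, add_zero, ladderTau_def, ladderTau_def,
      if_pos ⟨l₀, by omega, hE₀⟩, if_pos ⟨l₀, hl₀, hE₀⟩]
    have hS : sInf {l | l ≤ n ∧ Ex ξ L U x l ω} ∈ {l | l ≤ n ∧ Ex ξ L U x l ω} :=
      Nat.sInf_mem ⟨l₀, hl₀, hE₀⟩
    have hS' : sInf {l | l ≤ n + 1 ∧ Ex ξ L U x l ω} ∈ {l | l ≤ n + 1 ∧ Ex ξ L U x l ω} :=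
      Nat.sInf_mem ⟨l₀, by omega, hE₀⟩
    have hle : sInf {l | l ≤ n + 1 ∧ Ex ξ L U x l ω} ≤ l₀ := Nat.sInf_le ⟨by omega, hE₀⟩
    have h1 := hS.1
    exact le_antisymm (Nat.sInf_le ⟨by omega, hS.2⟩) (Nat.sInf_le ⟨by omega, hS'.2⟩)

lemma AA_antitone (n : ℕ) : AA ξ L U x (n + 1) ⊆ AA ξ L U x n :=
  fun ω h l hl => h l (by omega)

lemma ladderS_tau_bounds (hxL : L < x) (hxU : x < U) (n : ℕ) (ω : Ω) :
    L - x ≤ ladderS ξ (ladderTau ξ L U x n ω) ω ∧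
      ladderS ξ (ladderTau ξ L U x n ω) ω ≤ U + 1 - x := by
  have hmin : ∀ l < ladderTau ξ L U x n ω, ¬ Ex ξ L U x l ω := fun l hl => not_ex_of_lt_tau hl
  rcases Nat.eq_zero_or_pos (ladderTau ξ L U x n ω) with h0 | hpos
  · rw [h0, ladderS_zero]; omega
  · obtain ⟨m, hm⟩ : ∃ m, ladderTau ξ L U x n ω = m + 1 :=
      ⟨ladderTau ξ L U x n ω - 1, by omega⟩
    have hmE : ¬ Ex ξ L U x m ω := hmin m (by omega)
    unfold Ex at hmE
    push_neg at hmE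
    have hX := ladderX_bounds (ξ := ξ) (m + 1) ω
    rw [hm, ladderS_succ]
    omega

section Meas

lemma measurable_ladderX' {m0 : MeasurableSpace Ω} {k m : ℕ} (hk : 1 ≤ k) (hkm : k ≤ m)
    (hmeas : ∀ i, 1 ≤ i → i ≤ m → Measurable[m0] (ξ i)) :
    Measurable[m0] (ladderX ξ k) := by
  rcases Nat.eq_or_lt_of_le hk with h1 | h2
  · have he : ladderX ξ k = fun ω => if ξ 1 ω = 1 then (1 : ℤ) else -1 := by
      funext ω; rw [ladderX, if_pos h1.symm]
    rw [he]
    exact Measurable.ite ((hmeas 1 le_rfl (by omega)) (MeasurableSet.of_discrete (s := ({1} : Set ℤ))))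
      measurable_const measurable_const
  · have hk1 : k ≠ 1 := by omega
    have he : ladderX ξ k
        = fun ω => if ξ k ω = -1 then (-1 : ℤ) else if ξ (k - 1) ω = 1 then 2 else 1 := by
      funext ω; rw [ladderX, if_neg hk1]
    rw [he]
    have ha := hmeas k hk hkm
    have hb := hmeas (k - 1) (by omega) (by omega)
    exact Measurable.ite (ha (MeasurableSet.of_discrete (s := ({-1} : Set ℤ)))) measurable_const
      (Measurable.ite (hb (MeasurableSet.of_discrete (s := ({1} : Set ℤ)))) measurable_const measurable_const)

lemma measurable_ladderS' {m0 : MeasurableSpace Ω} {l m : ℕ} (hlm : l ≤ m)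
    (hmeas : ∀ i, 1 ≤ i → i ≤ m → Measurable[m0] (ξ i)) :
    Measurable[m0] (ladderS ξ l) := by
  show Measurable[m0] (fun ω => ∑ k ∈ Finset.Icc 1 l, ladderX ξ k ω)
  apply Finset.measurable_sum
  intro k hk
  rw [Finset.mem_Icc] at hk
  exact measurable_ladderX' hk.1 (hk.2.trans hlm) hmeas

lemma measurableSet_Ex' {m0 : MeasurableSpace Ω} {l m : ℕ} (hlm : l ≤ m)
    (hmeas : ∀ i, 1 ≤ i → i ≤ m → Measurable[m0] (ξ i)) :
    MeasurableSet[m0] {ω | Ex ξ L U x l ω} := by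
  have h := measurable_ladderS' (ξ := ξ) hlm hmeas
  have he : {ω | Ex ξ L U x l ω} = ladderS ξ l ⁻¹' {z | x + z ≤ L ∨ U ≤ x + z} := rfl
  rw [he]
  exact h MeasurableSet.of_discrete

lemma measurableSet_AA' {m0 : MeasurableSpace Ω} {n m : ℕ} (hnm : n ≤ m)
    (hmeas : ∀ i, 1 ≤ i → i ≤ m → Measurable[m0] (ξ i)) :
    MeasurableSet[m0] (AA ξ L U x n) := by
  have he : AA ξ L U x n = ⋂ (l : ℕ) (_ : l ≤ n), {ω | Ex ξ L U x l ω}ᶜ := by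
    ext ω; simp [AA, mem_AA_iff]
  rw [he]
  exact MeasurableSet.iInter fun l => MeasurableSet.iInter fun hl =>
    (measurableSet_Ex' (le_trans hl hnm) hmeas).compl

lemma measurableSet_CC' {m0 : MeasurableSpace Ω} {k m : ℕ} (hk : 1 ≤ k) (hkm : k ≤ m)
    (hmeas : ∀ i, 1 ≤ i → i ≤ m → Measurable[m0] (ξ i)) :
    MeasurableSet[m0] (CC ξ k) := by
  have he : CC ξ k = ξ k ⁻¹' {1} := rfl
  rw [he]
  exact (hmeas k hk hkm) MeasurableSet.of_discrete

lemma measurable_tau (hmeas : ∀ i, Measurable (ξ i)) (n : ℕ) :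
    Measurable (fun ω => ladderTau ξ L U x n ω) := by
  induction n with
  | zero =>
    have he : (fun ω => ladderTau ξ L U x 0 ω) = fun _ => 0 := funext fun ω => tau_zero ω
    rw [he]; exact measurable_const
  | succ n ih =>
    have he : (fun ω => ladderTau ξ L U x (n + 1) ω)
        = fun ω => ladderTau ξ L U x n ω + (AA ξ L U x n).indicator (fun _ => 1) ω := by
      funext ω
      rw [tau_succ]
      by_cases h : ω ∈ AA ξ L U x n <;> simp [h]
    rw [he]
    exact ih.add (measurable_const.indicator
      (measurableSet_AA' le_rfl (fun i _ _ => hmeas i)))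

lemma measurableSet_tau_eq (hmeas : ∀ i, Measurable (ξ i)) (n m : ℕ) :
    MeasurableSet {ω | ladderTau ξ L U x n ω = m} :=
  (measurable_tau hmeas n) (MeasurableSet.of_discrete (s := {m}))

lemma measurableSet_DD (hmeas : ∀ i, Measurable (ξ i)) (n : ℕ) :
    MeasurableSet (DD ξ L U x n) := by
  have he : DD ξ L U x n
      = ⋃ (m : ℕ) (_ : m < n), ({ω | ladderTau ξ L U x n ω = m} ∩ {ω | ξ m ω = 1}) := by
    ext ω
    simp only [DD, Set.mem_setOf_eq, Set.mem_iUnion, Set.mem_inter_iff]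
    constructor
    · rintro ⟨h1, h2⟩
      exact ⟨_, h1, rfl, h2⟩
    · rintro ⟨m, hm, heq, h2⟩
      constructor
      · rw [heq]; exact hm
      · rw [heq]; exact h2
  rw [he]
  exact MeasurableSet.iUnion fun m => MeasurableSet.iUnion fun hm =>
    ((measurableSet_tau_eq hmeas n m).inter ((hmeas m) (MeasurableSet.of_discrete (s := ({1} : Set ℤ)))))

end Meas

section Indep

variable (P : Measure Ω) [IsProbabilityMeasure P]

lemma pr_le_one (s : Set Ω) : (P s).toReal ≤ 1 := by
  have h := prob_le_one (μ := P) (s := s)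
  have := ENNReal.toReal_mono ENNReal.one_ne_top h
  simpa using this

lemma pr_inter_CC {p : ℝ} (hp : 0 ≤ p)
    (hmeas : ∀ i, Measurable (ξ i)) (hindep : iIndepFun ξ P)
    {m k : ℕ} (hmk : m < k) (hprob : P {ω | ξ k ω = 1} = ENNReal.ofReal p)
    {A : Set Ω}
    (hA : MeasurableSet[MeasurableSpace.comap
      (fun ω (i : Finset.Icc 1 m) => ξ i ω) inferInstance] A) :
    (P (A ∩ CC ξ k)).toReal = p * (P A).toReal := by
  obtain ⟨s, hs, rfl⟩ := MeasurableSpace.measurableSet_comap.mp hA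
  have hdisj : Disjoint (Finset.Icc 1 m) ({k} : Finset ℕ) := by
    simp only [Finset.disjoint_singleton_right, Finset.mem_Icc]
    omega
  have hIF := hindep.indepFun_finset (Finset.Icc 1 m) {k} hdisj hmeas
  have hkmem : k ∈ ({k} : Finset ℕ) := Finset.mem_singleton_self k
  have ht : MeasurableSet ((fun g : (i : ({k} : Finset ℕ)) → ℤ => g ⟨k, hkmem⟩) ⁻¹' {1}) :=
    (measurable_pi_apply _) MeasurableSet.of_discrete
  have heq := hIF.measure_inter_preimage_eq_mul s _ hs ht
  have hCC : (fun ω (i : ({k} : Finset ℕ)) => ξ (i : ℕ) ω) ⁻¹'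
      ((fun g : (i : ({k} : Finset ℕ)) → ℤ => g ⟨k, hkmem⟩) ⁻¹' {1}) = CC ξ k := rfl
  rw [hCC] at heq
  have hCCval : P (CC ξ k) = ENNReal.ofReal p := hprob
  rw [heq, ENNReal.toReal_mul, hCCval, ENNReal.toReal_ofReal hp, mul_comm]

lemma measurable_xi_comap {m : ℕ} {i : ℕ} (h1 : 1 ≤ i) (h2 : i ≤ m) :
    Measurable[MeasurableSpace.comap
      (fun ω (j : Finset.Icc 1 m) => ξ j ω) inferInstance] (ξ i) := by
  have hi : i ∈ Finset.Icc 1 m := by simp only [Finset.mem_Icc]; omega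
  exact (measurable_pi_apply (⟨i, hi⟩ : Finset.Icc 1 m)).comp
    (comap_measurable (fun ω (j : Finset.Icc 1 m) => ξ (j : ℕ) ω))

lemma measurableSet_AA_comap (n : ℕ) :
    MeasurableSet[MeasurableSpace.comap
      (fun ω (j : Finset.Icc 1 n) => ξ j ω) inferInstance] (AA ξ L U x n) :=
  measurableSet_AA' le_rfl (fun i h1 h2 => measurable_xi_comap h1 h2)

lemma measurableSet_CC_comap {k n : ℕ} (h1 : 1 ≤ k) (h2 : k ≤ n) :
    MeasurableSet[MeasurableSpace.comap
      (fun ω (j : Finset.Icc 1 n) => ξ j ω) inferInstance] (CC ξ k) :=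
  measurableSet_CC' h1 h2 (fun i h1 h2 => measurable_xi_comap h1 h2)

end Indep

section Integral

/-- Real-valued stopped time. -/
def tR (ξ : ℕ → Ω → ℤ) (L U x : ℤ) (n : ℕ) (ω : Ω) : ℝ := (ladderTau ξ L U x n ω : ℝ)

/-- Real-valued stopped walk. -/
def gR (ξ : ℕ → Ω → ℤ) (L U x : ℤ) (n : ℕ) (ω : Ω) : ℝ :=
  ((ladderS ξ (ladderTau ξ L U x n ω) ω : ℤ) : ℝ)

lemma tR_succ (n : ℕ) (ω : Ω) :
    tR ξ L U x (n + 1) ω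
      = tR ξ L U x n ω + (AA ξ L U x n).indicator (fun _ => (1 : ℝ)) ω := by
  rw [tR, tR, tau_succ]
  by_cases h : ω ∈ AA ξ L U x n <;> simp [h]

lemma gR_succ (n : ℕ) (ω : Ω) :
    gR ξ L U x (n + 1) ω
      = gR ξ L U x n ω
        + (AA ξ L U x n).indicator (fun ω => ((ladderX ξ (n + 1) ω : ℤ) : ℝ)) ω := by
  by_cases h : ω ∈ AA ξ L U x n
  · have h2 : ladderTau ξ L U x (n + 1) ω = n + 1 :=
      tau_eq_of_noexit (fun l hl => h l (by omega))
    have h3 : ladderTau ξ L U x n ω = n :=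
      tau_eq_of_noexit (fun l hl => h l (by omega))
    rw [gR, gR, h2, h3, ladderS_succ, Set.indicator_of_mem h]
    push_cast
    ring
  · have h2 : ladderTau ξ L U x (n + 1) ω = ladderTau ξ L U x n ω := by
      rw [tau_succ, if_neg h, add_zero]
    rw [gR, gR, h2, Set.indicator_of_notMem h, add_zero]

variable (P : Measure Ω) [IsProbabilityMeasure P]

lemma integrable_tR (hmeas : ∀ i, Measurable (ξ i)) (n : ℕ) :
    Integrable (tR ξ L U x n) P := by
  induction n with
  | zero =>
    have he : tR ξ L U x 0 = fun _ => (0 : ℝ) := by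
      funext ω; rw [tR, tau_zero]; norm_num
    rw [he]; exact integrable_const 0
  | succ n ih =>
    have he : tR ξ L U x (n + 1)
        = fun ω => tR ξ L U x n ω + (AA ξ L U x n).indicator (fun _ => (1 : ℝ)) ω :=
      funext fun ω => tR_succ n ω
    rw [he]
    exact ih.add ((integrable_const 1).indicator
      (measurableSet_AA' le_rfl (fun i _ _ => hmeas i)))

lemma integrable_XR (hmeas : ∀ i, Measurable (ξ i)) {k : ℕ} (hk : 1 ≤ k) :
    Integrable (fun ω => ((ladderX ξ k ω : ℤ) : ℝ)) P := by
  have hm : Measurable (fun ω => ((ladderX ξ k ω : ℤ) : ℝ)) :=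
    (Measurable.of_discrete (f := (Int.cast : ℤ → ℝ))).comp
      (measurable_ladderX' hk le_rfl (fun i _ _ => hmeas i))
  refine (integrable_const (2 : ℝ)).mono' hm.aestronglyMeasurable (ae_of_all _ fun ω => ?_)
  have hb := ladderX_bounds (ξ := ξ) k ω
  rw [Real.norm_eq_abs, abs_le]
  constructor
  · exact_mod_cast (by omega : (-2 : ℤ) ≤ ladderX ξ k ω)
  · exact_mod_cast hb.2

lemma integrable_gR (hmeas : ∀ i, Measurable (ξ i)) (n : ℕ) :
    Integrable (gR ξ L U x n) P := by
  induction n with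
  | zero =>
    have he : gR ξ L U x 0 = fun _ => (0 : ℝ) := by
      funext ω; rw [gR, tau_zero, ladderS_zero]; norm_num
    rw [he]; exact integrable_const 0
  | succ n ih =>
    have he : gR ξ L U x (n + 1)
        = fun ω => gR ξ L U x n ω
            + (AA ξ L U x n).indicator (fun ω => ((ladderX ξ (n + 1) ω : ℤ) : ℝ)) ω :=
      funext fun ω => gR_succ n ω
    rw [he]
    exact ih.add ((integrable_XR P hmeas (by omega)).indicator
      (measurableSet_AA' le_rfl (fun i _ _ => hmeas i)))

lemma integral_tR_succ (hmeas : ∀ i, Measurable (ξ i)) (n : ℕ) :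
    ∫ ω, tR ξ L U x (n + 1) ω ∂P
      = (∫ ω, tR ξ L U x n ω ∂P) + (P (AA ξ L U x n)).toReal := by
  have hAA : MeasurableSet (AA ξ L U x n) :=
    measurableSet_AA' le_rfl (fun i _ _ => hmeas i)
  simp only [tR_succ]
  rw [integral_add (integrable_tR P hmeas n) ((integrable_const 1).indicator hAA),
    integral_indicator_const (1 : ℝ) hAA, smul_eq_mul, mul_one]
  rfl

end Integral

section StepLemmas

lemma ladderX_of_neg {k : ℕ} {ω : Ω} (hk : 2 ≤ k) (h : ξ k ω = -1) :
    ladderX ξ k ω = -1 := by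
  rw [ladderX, if_neg (by omega : k ≠ 1), if_pos h]

lemma ladderX_of_pos_pos {k : ℕ} {ω : Ω} (hk : 2 ≤ k) (h : ξ k ω = 1)
    (h' : ξ (k - 1) ω = 1) : ladderX ξ k ω = 2 := by
  rw [ladderX, if_neg (by omega : k ≠ 1), if_neg (by rw [h]; norm_num), if_pos h']

lemma ladderX_of_pos_neg {k : ℕ} {ω : Ω} (hk : 2 ≤ k) (h : ξ k ω = 1)
    (h' : ξ (k - 1) ω ≠ 1) : ladderX ξ k ω = 1 := by
  rw [ladderX, if_neg (by omega : k ≠ 1), if_neg (by rw [h]; norm_num), if_neg h']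

lemma indicator_XR_decomp (hval : ∀ n ω, ξ n ω = 1 ∨ ξ n ω = -1) {n : ℕ} (hn : 1 ≤ n)
    (ω : Ω) :
    (AA ξ L U x n).indicator (fun ω => ((ladderX ξ (n + 1) ω : ℤ) : ℝ)) ω
      = (AA ξ L U x n).indicator (fun _ => (-1 : ℝ)) ω
        + ((AA ξ L U x n ∩ CC ξ (n + 1)).indicator (fun _ => (2 : ℝ)) ω
          + (AA ξ L U x n ∩ CC ξ n ∩ CC ξ (n + 1)).indicator (fun _ => (1 : ℝ)) ω) := by
  by_cases ha : ω ∈ AA ξ L U x n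
  · rcases hval (n + 1) ω with h1 | h1
    · have hc1 : ω ∈ CC ξ (n + 1) := h1
      by_cases h0 : ξ n ω = 1
      · have hX : ladderX ξ (n + 1) ω = 2 :=
          ladderX_of_pos_pos (by omega) h1 (by simpa using h0)
        have hm2 : ω ∈ AA ξ L U x n ∩ CC ξ (n + 1) := Set.mem_inter ha hc1
        have hm3 : ω ∈ AA ξ L U x n ∩ CC ξ n ∩ CC ξ (n + 1) :=
          Set.mem_inter (Set.mem_inter ha h0) hc1
        rw [Set.indicator_of_mem ha, Set.indicator_of_mem ha,
          Set.indicator_of_mem hm2, Set.indicator_of_mem hm3, hX]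
        norm_num
      · have hX : ladderX ξ (n + 1) ω = 1 :=
          ladderX_of_pos_neg (by omega) h1 (by simpa using h0)
        have hm2 : ω ∈ AA ξ L U x n ∩ CC ξ (n + 1) := Set.mem_inter ha hc1
        have hm3 : ω ∉ AA ξ L U x n ∩ CC ξ n ∩ CC ξ (n + 1) := by
          rintro ⟨⟨-, hh⟩, -⟩; exact h0 hh
        rw [Set.indicator_of_mem ha, Set.indicator_of_mem ha,
          Set.indicator_of_mem hm2, Set.indicator_of_notMem hm3, hX]
        norm_num
    · have hc1 : ω ∉ CC ξ (n + 1) := by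
        intro hc; rw [show ξ (n+1) ω = 1 from hc] at h1; norm_num at h1
      have hX : ladderX ξ (n + 1) ω = -1 := ladderX_of_neg (by omega) h1
      have hm2 : ω ∉ AA ξ L U x n ∩ CC ξ (n + 1) := by rintro ⟨-, hh⟩; exact hc1 hh
      have hm3 : ω ∉ AA ξ L U x n ∩ CC ξ n ∩ CC ξ (n + 1) := by
        rintro ⟨-, hh⟩; exact hc1 hh
      rw [Set.indicator_of_mem ha, Set.indicator_of_mem ha,
        Set.indicator_of_notMem hm2, Set.indicator_of_notMem hm3, hX]
      norm_num
  · have hm2 : ω ∉ AA ξ L U x n ∩ CC ξ (n + 1) := by rintro ⟨hh, -⟩; exact ha hh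
    have hm3 : ω ∉ AA ξ L U x n ∩ CC ξ n ∩ CC ξ (n + 1) := by
      rintro ⟨⟨hh, -⟩, -⟩; exact ha hh
    rw [Set.indicator_of_notMem ha, Set.indicator_of_notMem ha,
      Set.indicator_of_notMem hm2, Set.indicator_of_notMem hm3]
    norm_num

variable (P : Measure Ω) [IsProbabilityMeasure P]

lemma integral_gR_succ {p : ℝ} (hp0 : 0 < p)
    (hmeas : ∀ i, Measurable (ξ i)) (hindep : iIndepFun ξ P)
    (hval : ∀ n ω, ξ n ω = 1 ∨ ξ n ω = -1)
    (hprob : ∀ n, 1 ≤ n → P {ω | ξ n ω = 1} = ENNReal.ofReal p)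
    {n : ℕ} (hn : 1 ≤ n) :
    ∫ ω, gR ξ L U x (n + 1) ω ∂P
      = (∫ ω, gR ξ L U x n ω ∂P)
        + ((2 * p - 1) * (P (AA ξ L U x n)).toReal
            + p * (P (AA ξ L U x n ∩ CC ξ n)).toReal) := by
  have hAA : MeasurableSet (AA ξ L U x n) :=
    measurableSet_AA' le_rfl (fun i _ _ => hmeas i)
  have hCCn : MeasurableSet (CC ξ n) :=
    measurableSet_CC' hn le_rfl (fun i _ _ => hmeas i)
  have hCC1 : MeasurableSet (CC ξ (n + 1)) :=
    measurableSet_CC' (by omega) le_rfl (fun i _ _ => hmeas i)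
  have h1 : (P (AA ξ L U x n ∩ CC ξ (n + 1))).toReal
      = p * (P (AA ξ L U x n)).toReal :=
    pr_inter_CC P hp0.le hmeas hindep (by omega) (hprob (n + 1) (by omega))
      (measurableSet_AA_comap n)
  have h2 : (P (AA ξ L U x n ∩ CC ξ n ∩ CC ξ (n + 1))).toReal
      = p * (P (AA ξ L U x n ∩ CC ξ n)).toReal :=
    pr_inter_CC P hp0.le hmeas hindep (by omega) (hprob (n + 1) (by omega))
      ((measurableSet_AA_comap n).inter (measurableSet_CC_comap hn le_rfl))
  have hdecomp : ∀ ω, (AA ξ L U x n).indicator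
        (fun ω => ((ladderX ξ (n + 1) ω : ℤ) : ℝ)) ω
      = (AA ξ L U x n).indicator (fun _ => (-1 : ℝ)) ω
        + ((AA ξ L U x n ∩ CC ξ (n + 1)).indicator (fun _ => (2 : ℝ)) ω
          + (AA ξ L U x n ∩ CC ξ n ∩ CC ξ (n + 1)).indicator (fun _ => (1 : ℝ)) ω) :=
    indicator_XR_decomp hval hn
  have hi1 : Integrable ((AA ξ L U x n).indicator (fun _ => (-1 : ℝ))) P :=
    (integrable_const _).indicator hAA
  have hi2 : Integrable ((AA ξ L U x n ∩ CC ξ (n + 1)).indicator (fun _ => (2 : ℝ))) P :=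
    (integrable_const _).indicator (hAA.inter hCC1)
  have hi3 : Integrable
      ((AA ξ L U x n ∩ CC ξ n ∩ CC ξ (n + 1)).indicator (fun _ => (1 : ℝ))) P :=
    (integrable_const _).indicator ((hAA.inter hCCn).inter hCC1)
  have hstep : ∫ ω, (AA ξ L U x n).indicator
        (fun ω => ((ladderX ξ (n + 1) ω : ℤ) : ℝ)) ω ∂P
      = (2 * p - 1) * (P (AA ξ L U x n)).toReal
          + p * (P (AA ξ L U x n ∩ CC ξ n)).toReal := by
    calc ∫ ω, (AA ξ L U x n).indicator (fun ω => ((ladderX ξ (n + 1) ω : ℤ) : ℝ)) ω ∂P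
        = ∫ ω, ((AA ξ L U x n).indicator (fun _ => (-1 : ℝ)) ω
            + ((AA ξ L U x n ∩ CC ξ (n + 1)).indicator (fun _ => (2 : ℝ)) ω
              + (AA ξ L U x n ∩ CC ξ n ∩ CC ξ (n + 1)).indicator
                  (fun _ => (1 : ℝ)) ω)) ∂P := integral_congr_ae (ae_of_all _ hdecomp)
      _ = (∫ ω, (AA ξ L U x n).indicator (fun _ => (-1 : ℝ)) ω ∂P)
            + ∫ ω, ((AA ξ L U x n ∩ CC ξ (n + 1)).indicator (fun _ => (2 : ℝ)) ω
              + (AA ξ L U x n ∩ CC ξ n ∩ CC ξ (n + 1)).indicator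
                  (fun _ => (1 : ℝ)) ω) ∂P := integral_add hi1 (hi2.add hi3)
      _ = (∫ ω, (AA ξ L U x n).indicator (fun _ => (-1 : ℝ)) ω ∂P)
            + ((∫ ω, (AA ξ L U x n ∩ CC ξ (n + 1)).indicator (fun _ => (2 : ℝ)) ω ∂P)
              + ∫ ω, (AA ξ L U x n ∩ CC ξ n ∩ CC ξ (n + 1)).indicator
                  (fun _ => (1 : ℝ)) ω ∂P) := by rw [integral_add hi2 hi3]
      _ = (P (AA ξ L U x n)).toReal * (-1)
            + ((P (AA ξ L U x n ∩ CC ξ (n + 1))).toReal * 2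
              + (P (AA ξ L U x n ∩ CC ξ n ∩ CC ξ (n + 1))).toReal * 1) := by
            rw [integral_indicator_const _ hAA, integral_indicator_const _ (hAA.inter hCC1),
              integral_indicator_const _ ((hAA.inter hCCn).inter hCC1)]
            simp [smul_eq_mul]
            rfl
      _ = (2 * p - 1) * (P (AA ξ L U x n)).toReal
            + p * (P (AA ξ L U x n ∩ CC ξ n)).toReal := by rw [h1, h2]; ring
  simp only [gR_succ]
  rw [integral_add (integrable_gR P hmeas n)
      ((integrable_XR P hmeas (by omega)).indicator hAA), hstep]

lemma DD_succ_set (m : ℕ) :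
    DD ξ L U x (m + 2)
      = DD ξ L U x (m + 1)
        ∪ ((AA ξ L U x m ∩ CC ξ (m + 1)) \ (AA ξ L U x (m + 1) ∩ CC ξ (m + 1))) := by
  ext ω
  simp only [DD, Set.mem_setOf_eq, Set.mem_union, Set.mem_diff, Set.mem_inter_iff]
  constructor
  · rintro ⟨h1, h2⟩
    have hnA : ω ∉ AA ξ L U x (m + 1) := by
      intro hA
      have := tau_eq_of_noexit (ω := ω) (k := m + 2) (fun l hl => hA l (by omega))
      omega
    have heq : ladderTau ξ L U x (m + 2) ω = ladderTau ξ L U x (m + 1) ω := by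
      rw [tau_succ, if_neg hnA, add_zero]
    have hle : ladderTau ξ L U x (m + 1) ω ≤ m + 1 := tau_le _ _
    rcases lt_or_eq_of_le hle with hlt | hE
    · left
      refine ⟨hlt, ?_⟩
      rw [heq] at h2
      exact h2
    · right
      refine ⟨⟨fun l hl => ?_, ?_⟩, fun hmem => hnA hmem.1⟩
      · exact not_ex_of_lt_tau (k := m + 1) (by omega)
      · have : ξ (m + 1) ω = 1 := by rw [heq, hE] at h2; exact h2
        exact this
  · rintro (⟨h1, h2⟩ | ⟨⟨hAm, hCm⟩, hnot⟩)
    · have hnA : ω ∉ AA ξ L U x (m + 1) := by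
        intro hA
        have := tau_eq_of_noexit (ω := ω) (k := m + 1) (fun l hl => hA l (by omega))
        omega
      have heq : ladderTau ξ L U x (m + 2) ω = ladderTau ξ L U x (m + 1) ω := by
        rw [tau_succ, if_neg hnA, add_zero]
      constructor
      · omega
      · rw [heq]; exact h2
    · have hC : ξ (m + 1) ω = 1 := hCm
      have hnA : ω ∉ AA ξ L U x (m + 1) := fun hA => hnot ⟨hA, hCm⟩
      have hτ1 : ladderTau ξ L U x (m + 1) ω = m + 1 :=
        tau_eq_of_noexit (fun l hl => hAm l (by omega))
      have heq : ladderTau ξ L U x (m + 2) ω = ladderTau ξ L U x (m + 1) ω := by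
        rw [tau_succ, if_neg hnA, add_zero]
      constructor
      · omega
      · rw [heq, hτ1]; exact hC

lemma DD_succ_disjoint (m : ℕ) :
    Disjoint (DD ξ L U x (m + 1))
      ((AA ξ L U x m ∩ CC ξ (m + 1)) \ (AA ξ L U x (m + 1) ∩ CC ξ (m + 1))) := by
  rw [Set.disjoint_left]
  rintro ω hD ⟨⟨hAm, -⟩, -⟩
  have hτ1 : ladderTau ξ L U x (m + 1) ω = m + 1 :=
    tau_eq_of_noexit (fun l hl => hAm l (by omega))
  have h1 : ladderTau ξ L U x (m + 1) ω < m + 1 := hD.1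
  omega

variable (P : Measure Ω) [IsProbabilityMeasure P] in
lemma pr_DD_succ {p : ℝ} (hp0 : 0 < p)
    (hmeas : ∀ i, Measurable (ξ i)) (hindep : iIndepFun ξ P)
    (hprob : ∀ n, 1 ≤ n → P {ω | ξ n ω = 1} = ENNReal.ofReal p) (m : ℕ) :
    (P (DD ξ L U x (m + 2))).toReal
      = (P (DD ξ L U x (m + 1))).toReal
        + (p * (P (AA ξ L U x m)).toReal
            - (P (AA ξ L U x (m + 1) ∩ CC ξ (m + 1))).toReal) := by
  have hAAm : MeasurableSet (AA ξ L U x m) :=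
    measurableSet_AA' le_rfl (fun i _ _ => hmeas i)
  have hAA1 : MeasurableSet (AA ξ L U x (m + 1)) :=
    measurableSet_AA' le_rfl (fun i _ _ => hmeas i)
  have hCC : MeasurableSet (CC ξ (m + 1)) :=
    measurableSet_CC' (by omega) le_rfl (fun i _ _ => hmeas i)
  have hsub : AA ξ L U x (m + 1) ∩ CC ξ (m + 1) ⊆ AA ξ L U x m ∩ CC ξ (m + 1) :=
    Set.inter_subset_inter (AA_antitone m) subset_rfl
  have hmeasB : MeasurableSet
      ((AA ξ L U x m ∩ CC ξ (m + 1)) \ (AA ξ L U x (m + 1) ∩ CC ξ (m + 1))) :=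
    (hAAm.inter hCC).diff (hAA1.inter hCC)
  rw [DD_succ_set, measure_union (DD_succ_disjoint m) hmeasB,
    ENNReal.toReal_add (measure_ne_top P _) (measure_ne_top P _)]
  congr 1
  rw [measure_diff hsub (hAA1.inter hCC).nullMeasurableSet (measure_ne_top P _),
    ENNReal.toReal_sub_of_le (measure_mono hsub) (measure_ne_top P _),
    pr_inter_CC P hp0.le hmeas hindep (show m < m + 1 by omega)
      (hprob (m + 1) (by omega)) (measurableSet_AA_comap m)]

variable (P : Measure Ω) [IsProbabilityMeasure P] in
lemma main_identity {p : ℝ} (hp0 : 0 < p)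
    (hmeas : ∀ i, Measurable (ξ i)) (hindep : iIndepFun ξ P)
    (hval : ∀ n ω, ξ n ω = 1 ∨ ξ n ω = -1)
    (hprob : ∀ n, 1 ≤ n → P {ω | ξ n ω = 1} = ENNReal.ofReal p)
    (hxL : L < x) (hxU : x < U) (m : ℕ) :
    (p ^ 2 + 2 * p - 1) * (∫ ω, tR ξ L U x (m + 1) ω ∂P)
      = (∫ ω, gR ξ L U x (m + 1) ω ∂P) + p ^ 2 * (P (AA ξ L U x m)).toReal
        + p * (P (DD ξ L U x (m + 1))).toReal := by
  induction m with
  | zero =>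
    have htau1 : ∀ ω : Ω, ladderTau ξ L U x 1 ω = 1 := fun ω => by
      apply tau_eq_of_noexit
      intro l hl
      have hl0 : l = 0 := by omega
      subst hl0
      unfold Ex
      rw [ladderS_zero]
      omega
    have ht : ∫ ω, tR ξ L U x 1 ω ∂P = 1 := by
      have hptw : ∀ ω : Ω, tR ξ L U x 1 ω = 1 := fun ω => by
        rw [tR, htau1]; norm_num
      rw [integral_congr_ae (ae_of_all _ hptw), integral_const]
      simp
    have hAA0 : AA ξ L U x 0 = Set.univ := by
      rw [Set.eq_univ_iff_forall]
      intro ω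
      rw [mem_AA_iff]
      intro l hl
      have hl0 : l = 0 := by omega
      subst hl0
      unfold Ex
      rw [ladderS_zero]
      omega
    have hDD1 : DD ξ L U x 1 = ∅ := by
      ext ω
      simp only [DD, Set.mem_setOf_eq, Set.mem_empty_iff_false, iff_false, not_and]
      intro h
      rw [htau1] at h
      omega
    have hCC1m : MeasurableSet (CC ξ 1) :=
      measurableSet_CC' le_rfl le_rfl (fun i _ _ => hmeas i)
    have hg : ∫ ω, gR ξ L U x 1 ω ∂P = 2 * p - 1 := by
      have hS1 : ∀ ω : Ω, ladderS ξ 1 ω = ladderX ξ 1 ω := fun ω => by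
        show (∑ k ∈ Finset.Icc 1 1, ladderX ξ k ω) = ladderX ξ 1 ω
        rw [Finset.Icc_self, Finset.sum_singleton]
      have hptw : ∀ ω : Ω, gR ξ L U x 1 ω
          = (CC ξ 1).indicator (fun _ => (2 : ℝ)) ω - 1 := fun ω => by
        rw [gR, htau1, hS1]
        by_cases h : ξ 1 ω = 1
        · have hX : ladderX ξ 1 ω = 1 := by rw [ladderX, if_pos rfl, if_pos h]
          rw [hX, Set.indicator_of_mem (show ω ∈ CC ξ 1 from h)]
          norm_num
        · have hX : ladderX ξ 1 ω = -1 := by rw [ladderX, if_pos rfl, if_neg h]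
          rw [hX, Set.indicator_of_notMem (show ω ∉ CC ξ 1 from h)]
          norm_num
      rw [integral_congr_ae (ae_of_all _ hptw),
        integral_sub ((integrable_const _).indicator hCC1m) (integrable_const 1),
        integral_indicator_const _ hCC1m, integral_const]
      have hCCp : (P (CC ξ 1)).toReal = p := by
        have he : CC ξ 1 = {ω | ξ 1 ω = 1} := rfl
        rw [he, hprob 1 le_rfl, ENNReal.toReal_ofReal hp0.le]
      rw [measureReal_def, hCCp]
      simp [smul_eq_mul]
      ring
    rw [ht, hg, hAA0, hDD1]
    simp only [measure_univ, measure_empty, ENNReal.toReal_one, ENNReal.toReal_zero]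
    ring
  | succ m ih =>
    rw [integral_tR_succ P hmeas (m + 1),
      integral_gR_succ P hp0 hmeas hindep hval hprob (show 1 ≤ m + 1 by omega),
      pr_DD_succ P hp0 hmeas hindep hprob m]
    linear_combination ih

end StepLemmas

end LadderAux

open LadderAux

/-- If `p ≠ √2 - 1` (equivalently `p² + 2p - 1 ≠ 0`), then
`E[τ_n^x] ≤ 1 + (2·max(|L|,|U|) + 2|p-q| + |2p-q|) / |p² + 2p - 1|`. -/
theorem ladder_mean_duration_bound_noncritical (p q : ℝ) (hp0 : 0 < p) (hp1 : p < 1) (hq : q = 1 - p)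
    (hpc : p ≠ Real.sqrt 2 - 1)
    (P : Measure Ω) [IsProbabilityMeasure P]
    (ξ : ℕ → Ω → ℤ) (hmeas : ∀ n, Measurable (ξ n))
    (hindep : iIndepFun ξ P)
    (hval : ∀ n ω, ξ n ω = 1 ∨ ξ n ω = -1)
    (hprob : ∀ n, 1 ≤ n → P {ω | ξ n ω = 1} = ENNReal.ofReal p)
    (L U : ℤ) (hLU : U - L ≥ 4) (n : ℕ) (hn : 1 ≤ n)
    (x : ℤ) (hxL : L ≤ x) (hxU : x ≤ U) :
    (∫ ω, (ladderTau ξ L U x n ω : ℝ) ∂P)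
      ≤ 1 + (2 * max |(L : ℝ)| |(U : ℝ)| + 2 * |p - q| + |2 * p - q|)
            / |p ^ 2 + 2 * p - 1| := by
  subst hq
  by_cases hb : x ≤ L ∨ U ≤ x
  · have h0 : ∀ ω : Ω, ((ladderTau ξ L U x n ω : ℕ) : ℝ) = 0 := fun ω => by
      rw [tau_eq_zero_of_boundary hb n ω]; norm_num
    rw [integral_congr_ae (ae_of_all _ h0), integral_zero]
    positivity
  · push_neg at hb
    obtain ⟨hxL', hxU'⟩ := hb
    obtain ⟨m, rfl⟩ : ∃ m, n = m + 1 := ⟨n - 1, by omega⟩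
    have hid := main_identity (ξ := ξ) (L := L) (U := U) (x := x) P hp0 hmeas hindep hval
      hprob hxL' hxU' m
    have hgoal_eq : (∫ ω, ((ladderTau ξ L U x (m + 1) ω : ℕ) : ℝ) ∂P)
        = ∫ ω, tR ξ L U x (m + 1) ω ∂P := rfl
    rw [hgoal_eq]
    -- basic probability bounds
    have hAnn : (0 : ℝ) ≤ (P (AA ξ L U x m)).toReal := ENNReal.toReal_nonneg
    have hAle : (P (AA ξ L U x m)).toReal ≤ 1 := pr_le_one P _
    have hDnn : (0 : ℝ) ≤ (P (DD ξ L U x (m + 1))).toReal := ENNReal.toReal_nonneg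
    have hDle : (P (DD ξ L U x (m + 1))).toReal ≤ 1 := pr_le_one P _
    -- bounds on the stopped-walk integral
    have hgub : (∫ ω, gR ξ L U x (m + 1) ω ∂P) ≤ (U : ℝ) + 1 - x := by
      have hptw : ∀ ω, gR ξ L U x (m + 1) ω ≤ ((U + 1 - x : ℤ) : ℝ) := fun ω => by
        rw [gR]
        exact_mod_cast (ladderS_tau_bounds hxL' hxU' (m + 1) ω).2
      calc (∫ ω, gR ξ L U x (m + 1) ω ∂P)
          ≤ ∫ _, ((U + 1 - x : ℤ) : ℝ) ∂P :=
            integral_mono (integrable_gR P hmeas (m + 1)) (integrable_const _) hptw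
        _ = ((U + 1 - x : ℤ) : ℝ) := by rw [integral_const]; simp
        _ = (U : ℝ) + 1 - x := by push_cast; ring
    have hglb : (L : ℝ) - x ≤ ∫ ω, gR ξ L U x (m + 1) ω ∂P := by
      have hptw : ∀ ω, ((L - x : ℤ) : ℝ) ≤ gR ξ L U x (m + 1) ω := fun ω => by
        rw [gR]
        exact_mod_cast (ladderS_tau_bounds hxL' hxU' (m + 1) ω).1
      calc (L : ℝ) - x = ((L - x : ℤ) : ℝ) := by push_cast; ring
        _ = ∫ _, ((L - x : ℤ) : ℝ) ∂P := by rw [integral_const]; simp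
        _ ≤ ∫ ω, gR ξ L U x (m + 1) ω ∂P :=
            integral_mono (integrable_const _) (integrable_gR P hmeas (m + 1)) hptw
    have hμ0 : p ^ 2 + 2 * p - 1 ≠ 0 := by
      intro h0
      apply hpc
      have h2 : (p + 1) ^ 2 = 2 := by linear_combination h0
      have h3 : Real.sqrt 2 = p + 1 := by
        rw [← h2]
        exact Real.sqrt_sq (by linarith)
      rw [h3]; ring
    -- abs facts
    have habs1 : 1 - 2 * p ≤ |p - (1 - p)| := by
      calc 1 - 2 * p = -(p - (1 - p)) := by ring
        _ ≤ |p - (1 - p)| := neg_le_abs _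
    have habs2 : 3 * p - 1 ≤ |2 * p - (1 - p)| := by
      calc 3 * p - 1 = 2 * p - (1 - p) := by ring
        _ ≤ |2 * p - (1 - p)| := le_abs_self _
    have habs1' : (0 : ℝ) ≤ |p - (1 - p)| := abs_nonneg _
    have habs2' : (0 : ℝ) ≤ |2 * p - (1 - p)| := abs_nonneg _
    have hUmax : (U : ℝ) ≤ max |(L : ℝ)| |(U : ℝ)| :=
      le_trans (le_abs_self _) (le_max_right _ _)
    have hLmax : -(L : ℝ) ≤ max |(L : ℝ)| |(U : ℝ)| :=
      le_trans (neg_le_abs _) (le_max_left _ _)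
    have hxlo : (L : ℝ) + 1 ≤ x := by exact_mod_cast (by omega : L + 1 ≤ x)
    have hxhi : (x : ℝ) + 1 ≤ U := by exact_mod_cast (by omega : x + 1 ≤ U)
    rcases lt_or_gt_of_ne hμ0 with hneg | hpos
    · -- negative drift case
      rw [abs_of_neg hneg]
      have e1 : 0 ≤ p ^ 2 * (P (AA ξ L U x m)).toReal := by positivity
      have e2 : 0 ≤ p * (P (DD ξ L U x (m + 1))).toReal := by positivity
      have hkey : (L : ℝ) - x
          ≤ (p ^ 2 + 2 * p - 1) * ∫ ω, tR ξ L U x (m + 1) ω ∂P := by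
        rw [hid]; linarith
      have hden : (0 : ℝ) < -(p ^ 2 + 2 * p - 1) := by linarith
      have hTb : (∫ ω, tR ξ L U x (m + 1) ω ∂P)
          ≤ ((x : ℝ) - L) / -(p ^ 2 + 2 * p - 1) := by
        rw [le_div_iff₀ hden]
        nlinarith [hkey]
      have hnum : (x : ℝ) - L
          ≤ 2 * max |(L : ℝ)| |(U : ℝ)| + 2 * |p - (1 - p)| + |2 * p - (1 - p)| := by
        linarith
      have hdiv : ((x : ℝ) - L) / -(p ^ 2 + 2 * p - 1)
          ≤ (2 * max |(L : ℝ)| |(U : ℝ)| + 2 * |p - (1 - p)| + |2 * p - (1 - p)|)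
              / -(p ^ 2 + 2 * p - 1) := by gcongr
      have hfin : 0 ≤ (2 * max |(L : ℝ)| |(U : ℝ)| + 2 * |p - (1 - p)|
          + |2 * p - (1 - p)|) / -(p ^ 2 + 2 * p - 1) := by
        apply div_nonneg _ hden.le
        have : (0:ℝ) ≤ max |(L : ℝ)| |(U : ℝ)| :=
          le_trans (abs_nonneg _) (le_max_left _ _)
        linarith
      linarith
    · -- positive drift case
      rw [abs_of_pos hpos]
      have e1 : p ^ 2 * (P (AA ξ L U x m)).toReal ≤ p ^ 2 := by nlinarith
      have e2 : p * (P (DD ξ L U x (m + 1))).toReal ≤ p := by nlinarith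
      have hkey : (p ^ 2 + 2 * p - 1) * (∫ ω, tR ξ L U x (m + 1) ω ∂P)
          ≤ 2 * max |(L : ℝ)| |(U : ℝ)| + 2 * |p - (1 - p)| + |2 * p - (1 - p)|
            + (p ^ 2 + 2 * p - 1) := by
        rw [hid]
        linarith
      have hTb : (∫ ω, tR ξ L U x (m + 1) ω ∂P)
          ≤ (2 * max |(L : ℝ)| |(U : ℝ)| + 2 * |p - (1 - p)| + |2 * p - (1 - p)|
              + (p ^ 2 + 2 * p - 1)) / (p ^ 2 + 2 * p - 1) := by
        rw [le_div_iff₀ hpos]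
        nlinarith [hkey]
      have heq2 : (2 * max |(L : ℝ)| |(U : ℝ)| + 2 * |p - (1 - p)| + |2 * p - (1 - p)|
              + (p ^ 2 + 2 * p - 1)) / (p ^ 2 + 2 * p - 1)
          = 1 + (2 * max |(L : ℝ)| |(U : ℝ)| + 2 * |p - (1 - p)| + |2 * p - (1 - p)|)
              / (p ^ 2 + 2 * p - 1) := by
        rw [one_add_div hpos.ne']
        ring
      linarith

end
end
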